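/- arXiv:0906.2923 — 4 statements merged into one kernel-verified Lean document; each statement's English description precedes it below -/
import Mathlib

section
/- Define f : [1, ∞) → ℝ by f(x) = Σ_{n=1}^∞ (1/n)·#{p prime : p^n ≤ x} (a finite sum for each x). Then for every s ∈ ℂ with Re(s) > 1, Σ_p Σ_{n=1}^∞ (1/n)·p^{-ns} = s · ∫_1^∞ f(x)·x^{-s-1} dx, where the outer sum on the left ranges over the primes p. -/
open MeasureTheory Set

/-- Riemann's weighted prime-power counting function
`f(x) = ∑_{n≥1} (1/n) · #{p prime : p^n ≤ x}`. -/
noncomputable def riemannPrimeCount (x : ℝ) : ℝ :=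
  ∑' n : ℕ, (1 / ((n : ℝ) + 1)) *
    ({p : ℕ | p.Prime ∧ ((p : ℝ)) ^ (n + 1) ≤ x}.ncard : ℝ)

/- ### Auxiliary lemmas -/

lemma rpc_ppow_inj : Function.Injective (fun i : Nat.Primes × ℕ => (i.1 : ℕ) ^ (i.2 + 1)) := by
  have h : (fun i : Nat.Primes × ℕ => (i.1 : ℕ) ^ (i.2 + 1))
      = fun i => ((Nat.Primes.prodNatEquiv i : ℕ)) := by
    funext i; obtain ⟨p, k⟩ := i; rfl
  rw [h]
  exact Subtype.val_injective.comp Nat.Primes.prodNatEquiv.injective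

lemma rpc_primeSet_finite (k : ℕ) (t : ℝ) :
    {p : ℕ | p.Prime ∧ ((p : ℝ)) ^ (k + 1) ≤ t}.Finite := by
  refine (Set.finite_Iic (⌊t⌋₊)).subset ?_
  rintro p ⟨hp, hle⟩
  have h1 : (1 : ℝ) ≤ (p : ℝ) := by exact_mod_cast hp.one_lt.le
  have : (p : ℝ) ≤ t := le_trans (le_self_pow₀ h1 (Nat.succ_ne_zero k)) hle
  exact Nat.le_floor this

lemma rpc_pairSet_finite (t : ℝ) :
    {i : Nat.Primes × ℕ | ((i.1 : ℕ) : ℝ) ^ (i.2 + 1) ≤ t}.Finite := by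
  refine (Set.Finite.preimage rpc_ppow_inj.injOn (Set.finite_Iic (⌊t⌋₊))).subset ?_
  rintro ⟨p, k⟩ h
  have h1 : (1 : ℝ) ≤ ((p : ℕ) : ℝ) := by exact_mod_cast p.prop.one_lt.le
  refine Nat.le_floor ?_
  push_cast
  exact h

lemma rpc_primesSubtype_finite (k : ℕ) (t : ℝ) :
    {p : Nat.Primes | ((p : ℕ) : ℝ) ^ (k + 1) ≤ t}.Finite := by
  refine ((rpc_primeSet_finite k t).preimage
    (Set.injOn_of_injective
      (Subtype.val_injective (p := fun n => n ∈ {p : ℕ | p.Prime})))).subset ?_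
  rintro p hp
  exact ⟨p.prop, hp⟩

lemma rpc_tsum_primes_indicator (k : ℕ) (t : ℝ) :
    ∑' p : Nat.Primes, (if ((p : ℕ) : ℝ) ^ (k + 1) ≤ t then (1 : ℂ) else 0)
      = (({p : ℕ | p.Prime ∧ ((p : ℝ)) ^ (k + 1) ≤ t}.ncard : ℕ) : ℂ) := by
  set S : Set ℕ := {p : ℕ | p.Prime ∧ ((p : ℝ)) ^ (k + 1) ≤ t} with hS
  set A : Set Nat.Primes := {p : Nat.Primes | ((p : ℕ) : ℝ) ^ (k + 1) ≤ t} with hA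
  have hSfin : S.Finite := rpc_primeSet_finite k t
  have hAfin : A.Finite := rpc_primesSubtype_finite k t
  have h1 : ∑' p : Nat.Primes, (if ((p : ℕ) : ℝ) ^ (k + 1) ≤ t then (1 : ℂ) else 0)
      = ∑ p ∈ hAfin.toFinset, (if ((p : ℕ) : ℝ) ^ (k + 1) ≤ t then (1 : ℂ) else 0) := by
    refine tsum_eq_sum (fun p hp => if_neg ?_)
    simpa [hA] using (fun h => hp (hAfin.mem_toFinset.mpr h))
  rw [h1]
  have h2 : ∑ p ∈ hAfin.toFinset, (if ((p : ℕ) : ℝ) ^ (k + 1) ≤ t then (1 : ℂ) else 0)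
      = (hAfin.toFinset.card : ℂ) := by
    rw [Finset.sum_congr rfl (fun p hp => if_pos (by simpa [hA] using hAfin.mem_toFinset.mp hp))]
    simp
  rw [h2]
  congr 1
  have h3 : S = Subtype.val '' A := by
    ext n
    constructor
    · rintro ⟨hn, hle⟩
      exact ⟨⟨n, hn⟩, hle, rfl⟩
    · rintro ⟨p, hp, rfl⟩
      exact ⟨p.prop, hp⟩
  rw [h3]
  exact ((Set.ncard_image_of_injective A Nat.Primes.coe_nat_injective).trans
    (Set.ncard_eq_toFinset_card A hAfin)).symm

lemma rpc_pointwise_sum (s : ℂ) (t : ℝ) :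
    ∑' i : Nat.Primes × ℕ, Set.indicator (Set.Ici (((i.1 : ℕ) : ℝ) ^ (i.2 + 1)))
        (fun x : ℝ => (1 / ((i.2 : ℂ) + 1)) * (x : ℂ) ^ (-s - 1)) t
      = (riemannPrimeCount t : ℂ) * (t : ℂ) ^ (-s - 1) := by
  set c : Nat.Primes × ℕ → ℂ :=
    fun i => if ((i.1 : ℕ) : ℝ) ^ (i.2 + 1) ≤ t then (1 / ((i.2 : ℂ) + 1)) else 0 with hc
  have hstep1 : ∀ i : Nat.Primes × ℕ, Set.indicator (Set.Ici (((i.1 : ℕ) : ℝ) ^ (i.2 + 1)))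
        (fun x : ℝ => (1 / ((i.2 : ℂ) + 1)) * (x : ℂ) ^ (-s - 1)) t
      = c i * (t : ℂ) ^ (-s - 1) := by
    intro i
    by_cases h : ((i.1 : ℕ) : ℝ) ^ (i.2 + 1) ≤ t
    · rw [Set.indicator_of_mem (Set.mem_Ici.mpr h), hc]; simp [h]
    · rw [Set.indicator_of_notMem (fun hm => h (Set.mem_Ici.mp hm)), hc]; simp [h]
  rw [tsum_congr hstep1, tsum_mul_right]
  congr 1
  have hcsum : Summable c := by
    refine summable_of_finite_support ((rpc_pairSet_finite t).subset ?_)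
    intro i hi
    by_contra h
    exact hi (if_neg h)
  have he := (Equiv.prodComm ℕ Nat.Primes).tsum_eq c
  rw [← he]
  have hg : Summable (c ∘ (Equiv.prodComm ℕ Nat.Primes)) :=
    (Equiv.summable_iff _).mpr hcsum
  have hin : ∀ k : ℕ, Summable
      (fun p : Nat.Primes => (c ∘ (Equiv.prodComm ℕ Nat.Primes)) (k, p)) := by
    intro k
    refine summable_of_finite_support ((rpc_primesSubtype_finite k t).subset ?_)
    intro p hp
    by_contra h
    refine hp ?_
    simp only [Function.comp, Equiv.prodComm_apply, Prod.swap_prod_mk, hc] at *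
    exact if_neg h
  refine (Summable.tsum_prod' hg hin).trans ?_
  simp only [riemannPrimeCount, Complex.ofReal_tsum]
  refine tsum_congr (fun k => ?_)
  have hinner : ∀ p : Nat.Primes, (c ∘ (Equiv.prodComm ℕ Nat.Primes)) (k, p)
      = (1 / ((k : ℂ) + 1)) * (if ((p : ℕ) : ℝ) ^ (k + 1) ≤ t then (1 : ℂ) else 0) := by
    intro p
    by_cases h : ((p : ℕ) : ℝ) ^ (k + 1) ≤ t <;>
      simp [hc, h]
  rw [tsum_congr hinner, tsum_mul_left, rpc_tsum_primes_indicator k t]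
  push_cast
  ring

lemma rpc_aux_one_lt (i : Nat.Primes × ℕ) : 1 < ((i.1 : ℕ) : ℝ) ^ (i.2 + 1) := by
  have h2 : (2 : ℝ) ≤ ((i.1 : ℕ) : ℝ) := by exact_mod_cast i.1.prop.two_le
  calc (1 : ℝ) < 2 := one_lt_two
    _ ≤ ((i.1 : ℕ) : ℝ) := h2
    _ ≤ ((i.1 : ℕ) : ℝ) ^ (i.2 + 1) := le_self_pow₀ (by linarith) (Nat.succ_ne_zero _)

lemma rpc_aux_inter (i : Nat.Primes × ℕ) :
    Ici (((i.1 : ℕ) : ℝ) ^ (i.2 + 1)) ∩ Ioi 1 = Ici (((i.1 : ℕ) : ℝ) ^ (i.2 + 1)) :=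
  Set.inter_eq_left.mpr (fun _ hx => lt_of_lt_of_le (rpc_aux_one_lt i) hx)

lemma rpc_integral_indicator_cpow (s : ℂ) (hs : 1 < s.re) (i : Nat.Primes × ℕ) :
    (∫ t in Set.Ioi (1 : ℝ), Set.indicator (Set.Ici (((i.1 : ℕ) : ℝ) ^ (i.2 + 1)))
        (fun x : ℝ => (1 / ((i.2 : ℂ) + 1)) * (x : ℂ) ^ (-s - 1)) t)
      = (1 / ((i.2 : ℂ) + 1)) * ((i.1 : ℕ) : ℂ) ^ (-(((i.2 : ℂ) + 1) * s)) / s := by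
  have ha0 : (0 : ℝ) < ((i.1 : ℕ) : ℝ) ^ (i.2 + 1) := lt_trans one_pos (rpc_aux_one_lt i)
  have hre : (-s - 1).re < -1 := by
    simp only [Complex.sub_re, Complex.neg_re, Complex.one_re]
    linarith
  rw [MeasureTheory.integral_indicator measurableSet_Ici,
    Measure.restrict_restrict measurableSet_Ici, rpc_aux_inter i,
    integral_Ici_eq_integral_Ioi, integral_const_mul,
    integral_Ioi_cpow_of_lt hre ha0]
  have h1 : -s - 1 + 1 = -s := by ring
  have hcast : ((((i.1 : ℕ) : ℝ) ^ (i.2 + 1) : ℝ) : ℂ) = ((i.1 : ℕ) : ℂ) ^ (i.2 + 1) := by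
    push_cast; ring
  have hmul : -(((i.2 : ℂ) + 1) * s) = (((i.2 + 1 : ℕ) : ℂ)) * (-s) := by push_cast; ring
  have him : (Complex.log ((i.1 : ℕ) : ℂ) * ((i.2 + 1 : ℕ) : ℂ)).im = 0 := by
    simp [Complex.mul_im, Complex.log_im]
  have hpow : ((i.1 : ℕ) : ℂ) ^ (-(((i.2 : ℂ) + 1) * s))
      = (((i.1 : ℕ) : ℂ) ^ (i.2 + 1)) ^ (-s) := by
    rw [hmul, Complex.cpow_mul _ (by rw [him]; exact neg_lt_zero.mpr Real.pi_pos)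
      (by rw [him]; exact Real.pi_pos.le), Complex.cpow_natCast]
  rw [h1, hcast, hpow]
  rw [div_neg, neg_div, neg_neg, mul_div_assoc]

lemma rpc_norm_indicator_eq (s : ℂ) (i : Nat.Primes × ℕ) (t : ℝ) :
    ‖Set.indicator (Set.Ici (((i.1 : ℕ) : ℝ) ^ (i.2 + 1)))
        (fun x : ℝ => (1 / ((i.2 : ℂ) + 1)) * (x : ℂ) ^ (-s - 1)) t‖
      = Set.indicator (Set.Ici (((i.1 : ℕ) : ℝ) ^ (i.2 + 1)))
        (fun x : ℝ => (1 / ((i.2 : ℝ) + 1)) * x ^ (-s.re - 1)) t := by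
  rw [norm_indicator_eq_indicator_norm]
  by_cases h : t ∈ Set.Ici (((i.1 : ℕ) : ℝ) ^ (i.2 + 1))
  · rw [Set.indicator_of_mem h, Set.indicator_of_mem h]
    have ht0 : (0 : ℝ) < t := lt_of_lt_of_le (lt_trans one_pos (rpc_aux_one_lt i)) h
    rw [norm_mul]
    have hk : ((i.2 : ℂ) + 1) = ((i.2 + 1 : ℕ) : ℂ) := by push_cast; ring
    have h2 : ‖(1 : ℂ) / ((i.2 : ℂ) + 1)‖ = 1 / ((i.2 : ℝ) + 1) := by
      rw [norm_div, norm_one, hk, Complex.norm_natCast]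
      norm_num
    have h3 : ‖(t : ℂ) ^ (-s - 1)‖ = t ^ (-s.re - 1) := by
      rw [Complex.norm_cpow_eq_rpow_re_of_pos ht0]
      congr 1
    rw [h2, h3]
  · rw [Set.indicator_of_notMem h, Set.indicator_of_notMem h]

lemma rpc_integral_norm_indicator_eq (s : ℂ) (hs : 1 < s.re) (i : Nat.Primes × ℕ) :
    (∫ t in Set.Ioi (1 : ℝ), ‖Set.indicator (Set.Ici (((i.1 : ℕ) : ℝ) ^ (i.2 + 1)))
        (fun x : ℝ => (1 / ((i.2 : ℂ) + 1)) * (x : ℂ) ^ (-s - 1)) t‖)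
      = (1 / ((i.2 : ℝ) + 1)) * ((((i.1 : ℕ) : ℝ) ^ (i.2 + 1)) ^ (-s.re)) / s.re := by
  have ha0 : (0 : ℝ) < ((i.1 : ℕ) : ℝ) ^ (i.2 + 1) := lt_trans one_pos (rpc_aux_one_lt i)
  rw [MeasureTheory.setIntegral_congr_fun measurableSet_Ioi
      (fun t _ => rpc_norm_indicator_eq s i t),
    MeasureTheory.integral_indicator measurableSet_Ici,
    Measure.restrict_restrict measurableSet_Ici, rpc_aux_inter i,
    integral_Ici_eq_integral_Ioi, integral_const_mul,
    integral_Ioi_rpow_of_lt (by linarith : -s.re - 1 < -1) ha0]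
  have h1 : -s.re - 1 + 1 = -s.re := by ring
  rw [h1, div_neg, neg_div, neg_neg, mul_div_assoc]

lemma rpc_integrable_indicator_cpow (s : ℂ) (hs : 1 < s.re) (i : Nat.Primes × ℕ) :
    Integrable (Set.indicator (Set.Ici (((i.1 : ℕ) : ℝ) ^ (i.2 + 1)))
        (fun x : ℝ => (1 / ((i.2 : ℂ) + 1)) * (x : ℂ) ^ (-s - 1)))
      (volume.restrict (Set.Ioi (1 : ℝ))) := by
  have ha0 : (0 : ℝ) < ((i.1 : ℕ) : ℝ) ^ (i.2 + 1) := lt_trans one_pos (rpc_aux_one_lt i)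
  have hre : (-s - 1).re < -1 := by
    simp only [Complex.sub_re, Complex.neg_re, Complex.one_re]; linarith
  rw [MeasureTheory.integrable_indicator_iff measurableSet_Ici, MeasureTheory.IntegrableOn,
    Measure.restrict_restrict measurableSet_Ici, rpc_aux_inter i]
  exact Iff.mpr integrableOn_Ici_iff_integrableOn_Ioi
    ((integrableOn_Ioi_cpow_of_lt hre ha0).const_mul _)

lemma rpc_summable_norm_integrals (s : ℂ) (hs : 1 < s.re) :
    Summable (fun i : Nat.Primes × ℕ =>
      (1 / ((i.2 : ℝ) + 1)) * ((((i.1 : ℕ) : ℝ) ^ (i.2 + 1)) ^ (-s.re)) / s.re) := by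
  have hσ : (0 : ℝ) < s.re := by linarith
  have hbase : Summable (fun i : Nat.Primes × ℕ => (((i.1 : ℕ) : ℝ) ^ (i.2 + 1)) ^ (-s.re)) := by
    have h1 : Summable (fun n : ℕ => (n : ℝ) ^ (-s.re)) :=
      Real.summable_nat_rpow.mpr (by linarith)
    refine (h1.comp_injective rpc_ppow_inj).congr (fun i => ?_)
    simp only [Function.comp]
    congr 1
    push_cast
    ring
  refine Summable.of_nonneg_of_le (fun i => ?_) (fun i => ?_) (hbase.mul_right s.re⁻¹)
  · have h0 : (0 : ℝ) ≤ (((i.1 : ℕ) : ℝ) ^ (i.2 + 1)) ^ (-s.re) :=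
      Real.rpow_nonneg (le_of_lt (lt_trans one_pos (rpc_aux_one_lt i))) _
    positivity
  · have h0 : (0 : ℝ) ≤ (((i.1 : ℕ) : ℝ) ^ (i.2 + 1)) ^ (-s.re) :=
      Real.rpow_nonneg (le_of_lt (lt_trans one_pos (rpc_aux_one_lt i))) _
    have hk : (1 : ℝ) / ((i.2 : ℝ) + 1) ≤ 1 := by
      rw [div_le_one (by positivity)]
      simp
    calc (1 / ((i.2 : ℝ) + 1)) * ((((i.1 : ℕ) : ℝ) ^ (i.2 + 1)) ^ (-s.re)) / s.re
        = (1 / ((i.2 : ℝ) + 1)) * (((((i.1 : ℕ) : ℝ) ^ (i.2 + 1)) ^ (-s.re)) * s.re⁻¹) := by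
          ring
      _ ≤ 1 * (((((i.1 : ℕ) : ℝ) ^ (i.2 + 1)) ^ (-s.re)) * s.re⁻¹) := by
          gcongr
      _ = ((((i.1 : ℕ) : ℝ) ^ (i.2 + 1)) ^ (-s.re)) * s.re⁻¹ := one_mul _

/-- For `Re s > 1`, `log ζ(s) = ∑_p ∑_{n≥1} (1/n) p^{-ns} = s ∫_1^∞ f(x) x^{-s-1} dx`,
where `f` is Riemann's weighted prime-power counting function. -/
theorem log_zeta_eq_integral_primeCount (s : ℂ) (hs : 1 < s.re) :
    (∑' x : Nat.Primes × ℕ,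
        (1 / ((x.2 : ℂ) + 1)) * ((x.1 : ℕ) : ℂ) ^ (-(((x.2 : ℂ) + 1) * s))) =
      s * ∫ x in Set.Ioi (1 : ℝ), (riemannPrimeCount x : ℂ) * (x : ℂ) ^ (-s - 1) := by
  have hs0 : s ≠ 0 := by
    intro h
    rw [h] at hs
    norm_num at hs
  have hswap := MeasureTheory.integral_tsum_of_summable_integral_norm
    (F := fun i : Nat.Primes × ℕ => Set.indicator (Set.Ici (((i.1 : ℕ) : ℝ) ^ (i.2 + 1)))
      (fun x : ℝ => (1 / ((i.2 : ℂ) + 1)) * (x : ℂ) ^ (-s - 1)))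
    (μ := volume.restrict (Set.Ioi (1 : ℝ)))
    (fun i => rpc_integrable_indicator_cpow s hs i)
    ((rpc_summable_norm_integrals s hs).congr
      (fun i => (rpc_integral_norm_indicator_eq s hs i).symm))
  calc (∑' x : Nat.Primes × ℕ,
        (1 / ((x.2 : ℂ) + 1)) * ((x.1 : ℕ) : ℂ) ^ (-(((x.2 : ℂ) + 1) * s)))
      = ∑' i : Nat.Primes × ℕ, s * (∫ t in Set.Ioi (1 : ℝ),
          Set.indicator (Set.Ici (((i.1 : ℕ) : ℝ) ^ (i.2 + 1)))
            (fun x : ℝ => (1 / ((i.2 : ℂ) + 1)) * (x : ℂ) ^ (-s - 1)) t) := by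
        refine tsum_congr (fun i => ?_)
        rw [rpc_integral_indicator_cpow s hs i, mul_comm s, div_mul_cancel₀ _ hs0]
    _ = s * ∑' i : Nat.Primes × ℕ, (∫ t in Set.Ioi (1 : ℝ),
          Set.indicator (Set.Ici (((i.1 : ℕ) : ℝ) ^ (i.2 + 1)))
            (fun x : ℝ => (1 / ((i.2 : ℂ) + 1)) * (x : ℂ) ^ (-s - 1)) t) := tsum_mul_left
    _ = s * ∫ t in Set.Ioi (1 : ℝ), ∑' i : Nat.Primes × ℕ,
          Set.indicator (Set.Ici (((i.1 : ℕ) : ℝ) ^ (i.2 + 1)))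
            (fun x : ℝ => (1 / ((i.2 : ℂ) + 1)) * (x : ℂ) ^ (-s - 1)) t := by rw [hswap]
    _ = s * ∫ x in Set.Ioi (1 : ℝ), (riemannPrimeCount x : ℂ) * (x : ℂ) ^ (-s - 1) := by
        congr 1
        exact MeasureTheory.setIntegral_congr_fun measurableSet_Ioi
          (fun t _ => rpc_pointwise_sum s t)
end

section
/- For every real σ with -2 < σ < 1, the value ζ(σ) of the Riemann zeta function is real and strictly negative. -/
open Complex Real Set

noncomputable def etaF (k : ℕ) (s : ℂ) : ℂ :=
  ((2 * k + 1 : ℝ) : ℂ) ^ (-s) - ((2 * k + 2 : ℝ) : ℂ) ^ (-s)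

noncomputable def etaG (s : ℂ) : ℂ := ∑' k, etaF k s

-- derivative of x ↦ (x:ℂ)^(-s)
lemma hasDerivAt_cpow_negs {s : ℂ} (hs : s ≠ 0) {x : ℝ} (hx : 0 < x) :
    HasDerivAt (fun y : ℝ => (y : ℂ) ^ (-s)) (-s * (x : ℂ) ^ (-s - 1)) x := by
  have h := hasDerivAt_ofReal_cpow_const' hx.ne' (r := -s - 1) (by
    intro h; apply hs; linear_combination -h)
  have h2 := h.const_mul (-s)
  have : (fun y : ℝ => -s * ((y : ℂ) ^ (-s - 1 + 1) / (-s - 1 + 1))) =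
      fun y : ℝ => (y : ℂ) ^ (-s) := by
    funext y
    have : (-s - 1 + 1 : ℂ) = -s := by ring
    rw [this]
    field_simp [neg_ne_zero.mpr hs]
  rw [this] at h2
  exact h2

lemma etaF_bound {δ : ℝ} (hδ : 0 < δ) (k : ℕ) {s : ℂ} (hs : δ ≤ s.re) :
    ‖etaF k s‖ ≤ ‖s‖ * ((2 * k + 1 : ℝ)) ^ (-δ - 1) := by
  have hs0 : s ≠ 0 := by
    intro h; rw [h] at hs; simp at hs; linarith
  set a : ℝ := 2 * k + 1 with ha
  set b : ℝ := 2 * k + 2 with hb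
  have hk : (0:ℝ) ≤ (k:ℝ) := Nat.cast_nonneg k
  have ha1 : (1 : ℝ) ≤ a := by rw [ha]; linarith
  have hab : a ≤ b := by rw [ha, hb]; linarith
  have key : ∀ x ∈ Icc a b, HasDerivWithinAt (fun y : ℝ => (y : ℂ) ^ (-s))
      (-s * (x : ℂ) ^ (-s - 1)) (Icc a b) x := fun x hx =>
    (hasDerivAt_cpow_negs hs0 (lt_of_lt_of_le (by linarith) hx.1)).hasDerivWithinAt
  have bnd : ∀ x ∈ Icc a b, ‖-s * (x : ℂ) ^ (-s - 1)‖ ≤ ‖s‖ * a ^ (-δ - 1) := by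
    intro x hx
    have hx0 : (0 : ℝ) < x := lt_of_lt_of_le (by linarith) hx.1
    rw [norm_mul, norm_neg]
    refine mul_le_mul_of_nonneg_left ?_ (norm_nonneg s)
    rw [Complex.norm_cpow_eq_rpow_re_of_pos hx0]
    have h1 : x ^ ((-s - 1).re) ≤ a ^ ((-s - 1).re) := by
      apply Real.rpow_le_rpow_of_nonpos (by linarith) hx.1
      simp only [Complex.sub_re, Complex.neg_re, Complex.one_re]
      linarith
    refine h1.trans ?_
    apply Real.rpow_le_rpow_of_exponent_le ha1
    simp only [Complex.sub_re, Complex.neg_re, Complex.one_re]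
    linarith
  have := (convex_Icc a b).norm_image_sub_le_of_norm_hasDerivWithin_le key bnd
      (left_mem_Icc.mpr hab) (right_mem_Icc.mpr hab)
  have hba : b - a = 1 := by rw [ha, hb]; ring
  rw [show ‖(b : ℝ) - a‖ = 1 by rw [Real.norm_eq_abs, hba]; norm_num, mul_one] at this
  have : ‖((b : ℝ) : ℂ) ^ (-s) - ((a : ℝ) : ℂ) ^ (-s)‖ ≤ ‖s‖ * a ^ (-δ - 1) := this
  rw [etaF, norm_sub_rev]
  rw [ha, hb] at this
  convert this using 3

lemma summable_bound {δ : ℝ} (hδ : 0 < δ) :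
    Summable (fun k : ℕ => ((2 * k + 1 : ℝ)) ^ (-δ - 1)) := by
  have h1 : Summable (fun k : ℕ => ((k : ℝ) + 1) ^ (-δ - 1)) := by
    have := (Real.summable_nat_rpow (p := -δ - 1)).mpr (by linarith)
    have := (summable_nat_add_iff (f := fun n : ℕ => (n : ℝ) ^ (-δ - 1)) 1).mpr this
    simpa [Nat.cast_add, Nat.cast_one] using this
  refine Summable.of_nonneg_of_le (fun k => ?_) (fun k => ?_) h1
  · positivity
  · apply Real.rpow_le_rpow_of_nonpos (by positivity) (by push_cast; linarith) (by linarith)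

lemma differentiableAt_etaG {s : ℂ} (hs : 0 < s.re) : DifferentiableAt ℂ etaG s := by
  set δ : ℝ := s.re / 2 with hδdef
  have hδ : 0 < δ := by positivity
  set R : ℝ := ‖s‖ + 1 with hR
  set V : Set ℂ := {z | δ < z.re} ∩ Metric.ball 0 R with hV
  have hVo : IsOpen V := ((isOpen_lt continuous_const continuous_re)).inter Metric.isOpen_ball
  have hsV : s ∈ V := by
    constructor
    · simp only [mem_setOf_eq]; linarith
    · simp [hR]
  have hdiff : DifferentiableOn ℂ etaG V := by
    have : DifferentiableOn ℂ (fun z => ∑' k, etaF k z) V := by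
      apply differentiableOn_tsum_of_summable_norm
        ((summable_bound hδ).mul_left R)
        (fun k => ?_) hVo (fun k w hw => ?_)
      · intro z hz
        apply DifferentiableAt.differentiableWithinAt
        apply DifferentiableAt.sub <;>
          exact (differentiableAt_neg_iff.mpr differentiableAt_id).const_cpow
            (Or.inl (Complex.ofReal_ne_zero.mpr (by positivity)))
      · calc ‖etaF k w‖ ≤ ‖w‖ * ((2 * k + 1 : ℝ)) ^ (-δ - 1) :=
              etaF_bound hδ k hw.1.le
          _ ≤ R * ((2 * k + 1 : ℝ)) ^ (-δ - 1) := by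
              apply mul_le_mul_of_nonneg_right _ (by positivity)
              have := mem_ball_zero_iff.mp hw.2
              linarith
    exact this
  exact (hdiff.differentiableAt (hVo.mem_nhds hsV))

lemma summable_negs {s : ℂ} (hs : 1 < s.re) :
    Summable (fun n : ℕ => ((n + 1 : ℝ) : ℂ) ^ (-s)) := by
  have h : Summable (fun n : ℕ => 1 / (n : ℂ) ^ s) := Complex.summable_one_div_nat_cpow.mpr hs
  have h2 := (summable_nat_add_iff (f := fun n : ℕ => 1 / (n : ℂ) ^ s) 1).mpr h
  refine h2.congr fun n => ?_
  rw [cpow_neg, one_div]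
  push_cast
  ring_nf

lemma etaG_eq_of_one_lt {s : ℂ} (hs : 1 < s.re) :
    etaG s = (1 - 2 ^ (1 - s)) * riemannZeta s := by
  have hF := summable_negs hs
  have hA : Summable (fun k : ℕ => ((2 * k + 1 : ℝ) : ℂ) ^ (-s)) := by
    have := hF.comp_injective (fun a b (h : 2*a = 2*b) => by omega)
    refine this.congr fun k => ?_
    simp only [Function.comp_apply]
    norm_num
  have hB : Summable (fun k : ℕ => ((2 * k + 2 : ℝ) : ℂ) ^ (-s)) := by
    have := hF.comp_injective
      (fun a b (h : 2*a+1 = 2*b+1) => by omega)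
    refine this.congr fun k => ?_
    simp only [Function.comp_apply]
    push_cast
    ring_nf
  have hzeta : riemannZeta s = ∑' n : ℕ, ((n + 1 : ℝ) : ℂ) ^ (-s) := by
    rw [zeta_eq_tsum_one_div_nat_add_one_cpow hs]
    refine tsum_congr fun n => ?_
    rw [cpow_neg, one_div]
    push_cast
    ring_nf
  have hsplit : (∑' k : ℕ, ((2 * k + 1 : ℝ) : ℂ) ^ (-s)) +
      (∑' k : ℕ, ((2 * k + 2 : ℝ) : ℂ) ^ (-s)) = riemannZeta s := by
    rw [hzeta]
    have := tsum_even_add_odd (f := fun n : ℕ => ((n + 1 : ℝ) : ℂ) ^ (-s)) ?_ ?_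
    · rw [← this]
      congr 1 <;> refine tsum_congr fun k => ?_ <;> push_cast <;> ring_nf
    · exact hA.congr fun k => by push_cast; ring_nf
    · exact hB.congr fun k => by push_cast; ring_nf
  have hBval : (∑' k : ℕ, ((2 * k + 2 : ℝ) : ℂ) ^ (-s)) = 2 ^ (-s) * riemannZeta s := by
    rw [hzeta, ← tsum_mul_left]
    refine tsum_congr fun k => ?_
    rw [show ((2 * k + 2 : ℝ) : ℂ) = ((2 : ℝ) : ℂ) * ((k + 1 : ℝ) : ℂ) by push_cast; ring,
      mul_cpow_ofReal_nonneg (by norm_num) (by positivity)]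
    norm_num
  have hgs : etaG s = (∑' k : ℕ, ((2 * k + 1 : ℝ) : ℂ) ^ (-s)) -
      (∑' k : ℕ, ((2 * k + 2 : ℝ) : ℂ) ^ (-s)) := hA.tsum_sub hB
  have h2s : (2 : ℂ) ^ (1 - s) = 2 * 2 ^ (-s) := by
    rw [show (1 - s : ℂ) = 1 + -s by ring, cpow_add _ _ (by norm_num), cpow_one]
  rw [hgs, hBval, eq_comm]
  have : (∑' k : ℕ, ((2 * k + 1 : ℝ) : ℂ) ^ (-s)) = riemannZeta s - 2 ^ (-s) * riemannZeta s := by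
    rw [← hBval]; linear_combination hsplit
  rw [this, h2s]
  ring

lemma segment_re_pos (x y : ℂ) (hx : 0 < x.re) (hy : 0 < y.re) :
    ∀ z ∈ segment ℝ x y, 0 < z.re := by
  rintro z ⟨a, b, ha, hb, hab, rfl⟩
  simp only [Complex.add_re, Complex.smul_re, smul_eq_mul]
  rcases eq_or_lt_of_le ha with h | h
  · rw [← h]; simp only [zero_mul, zero_add]
    have : b = 1 := by linarith
    rw [this]; simpa using hy
  · nlinarith

lemma preconnected_omega : IsPreconnected {z : ℂ | 0 < z.re ∧ z ≠ 1} := by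
  set Ω : Set ℂ := {z : ℂ | 0 < z.re ∧ z ≠ 1} with hΩ
  apply isPreconnected_of_forall (2 : ℂ)
  intro y hy
  obtain ⟨hy0, hy1⟩ := hy
  by_cases him : y.im = 0
  · -- go through y + I
    refine ⟨segment ℝ 2 (y + I) ∪ segment ℝ (y + I) y, ?_, ?_, ?_, ?_⟩
    · rintro z (hz | hz)
      · refine ⟨segment_re_pos _ _ (by norm_num) (by simp [Complex.add_re]; linarith) z hz, ?_⟩
        obtain ⟨a, b, ha, hb, hab, rfl⟩ := hz
        intro h
        have him' : (a • (2:ℂ) + b • (y + I)).im = b := by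
          simp [Complex.smul_im, him]
        have : b = 0 := by rw [h] at him'; simpa using him'.symm
        have : a = 1 := by linarith
        rw [‹b = 0›, ‹a = 1›] at h
        simp at h
      · refine ⟨segment_re_pos _ _ (by simp [Complex.add_re]; linarith) hy0 z hz, ?_⟩
        obtain ⟨a, b, ha, hb, hab, rfl⟩ := hz
        intro h
        have hre : (a • (y + I) + b • y).re = y.re := by
          simp [Complex.smul_re, Complex.add_re]
          nlinarith [hab]
        have him2 : (a • (y + I) + b • y).im = a := by
          simp [Complex.smul_im, him]
        rw [h] at hre him2
        simp at hre him2
        apply hy1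
        have hb1 : b = 1 := by linarith
        have : a • (y + I) + b • y = y := by
          rw [← him2, hb1]; simp
        rw [← h, this]
    · exact Or.inl (left_mem_segment _ _ _)
    · exact Or.inr (right_mem_segment _ _ _)
    · exact ((convex_segment _ _).isPreconnected).union (y + I)
        (right_mem_segment _ _ _) (left_mem_segment _ _ _)
        (convex_segment _ _).isPreconnected
  · -- straight segment
    refine ⟨segment ℝ 2 y, ?_, left_mem_segment _ _ _, right_mem_segment _ _ _,
      (convex_segment _ _).isPreconnected⟩
    rintro z hz
    refine ⟨segment_re_pos _ _ (by norm_num) hy0 z hz, ?_⟩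
    obtain ⟨a, b, ha, hb, hab, rfl⟩ := hz
    intro h
    have him' : (a • (2:ℂ) + b • y).im = b * y.im := by
      simp [Complex.smul_im]
    rw [h] at him'
    simp at him'
    rcases him' with h0 | h0
    · have : a = 1 := by linarith
      rw [h0, this] at h
      simp at h
    · exact him h0

lemma etaG_eq_full {s : ℂ} (hs : 0 < s.re) (hs1 : s ≠ 1) :
    etaG s = (1 - 2 ^ (1 - s)) * riemannZeta s := by
  set Ω : Set ℂ := {z : ℂ | 0 < z.re ∧ z ≠ 1} with hΩ
  have hΩo : IsOpen Ω := (isOpen_lt continuous_const continuous_re).and isOpen_ne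
  have hf : AnalyticOnNhd ℂ etaG Ω := by
    refine DifferentiableOn.analyticOnNhd (fun z hz => ?_) hΩo
    exact (differentiableAt_etaG hz.1).differentiableWithinAt
  have hg : AnalyticOnNhd ℂ (fun z => (1 - 2 ^ (1 - z)) * riemannZeta z) Ω := by
    refine DifferentiableOn.analyticOnNhd (fun z hz => ?_) hΩo
    have hd1 : DifferentiableAt ℂ (fun z : ℂ => (2 : ℂ) ^ (1 - z)) z :=
      ((differentiableAt_const _).sub differentiableAt_id).const_cpow (Or.inl two_ne_zero)
    exact (((differentiableAt_const 1).sub hd1).mul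
      (differentiableAt_riemannZeta hz.2)).differentiableWithinAt
  have h2 : (2 : ℂ) ∈ Ω := by constructor <;> norm_num
  have hsΩ : s ∈ Ω := ⟨hs, hs1⟩
  refine hf.eqOn_of_preconnected_of_eventuallyEq hg preconnected_omega h2 ?_ hsΩ
  have hV : {z : ℂ | 1 < z.re} ∈ nhds (2 : ℂ) :=
    (continuous_re.isOpen_preimage _ isOpen_Ioi).mem_nhds (by norm_num)
  filter_upwards [hV] with z hz using etaG_eq_of_one_lt hz

lemma etaG_real_pos {σ : ℝ} (h0 : 0 < σ) :
    ∃ T : ℝ, 0 < T ∧ etaG (σ : ℂ) = (T : ℂ) := by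
  set r : ℕ → ℝ := fun k => (2 * k + 1 : ℝ) ^ (-σ) - (2 * k + 2 : ℝ) ^ (-σ) with hr
  have hterm : ∀ k, etaF k (σ : ℂ) = ((r k : ℝ) : ℂ) := by
    intro k
    rw [etaF, hr]
    have e1 : (-(σ:ℂ)) = ((-σ : ℝ) : ℂ) := by push_cast; ring
    rw [e1, ← Complex.ofReal_cpow (by positivity) (-σ),
      ← Complex.ofReal_cpow (by positivity) (-σ)]
    push_cast
    ring
  have hrpos : ∀ k, 0 < r k := by
    intro k
    rw [hr]
    have := Real.rpow_lt_rpow_of_neg (x := (2 * k + 1 : ℝ)) (y := (2 * k + 2 : ℝ))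
      (by positivity) (by linarith) (by linarith : -σ < 0)
    simpa using sub_pos.mpr this
  have hsum : Summable r := by
    have hc : Summable (fun k => etaF k (σ : ℂ)) := by
      apply Summable.of_norm_bounded ((summable_bound h0).mul_left ‖(σ : ℂ)‖)
      intro k
      exact etaF_bound h0 k (by simp)
    exact Complex.summable_ofReal.mp (hc.congr hterm)
  refine ⟨∑' k, r k, hsum.tsum_pos (fun k => (hrpos k).le) 0 (hrpos 0), ?_⟩
  rw [etaG, Complex.ofReal_tsum]
  exact tsum_congr hterm

lemma zeta_real_pos {σ : ℝ} (h : 1 < σ) :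
    ∃ Z : ℝ, 0 < Z ∧ riemannZeta (σ : ℂ) = (Z : ℂ) := by
  have hre : 1 < (σ : ℂ).re := by simpa using h
  have hterm : ∀ n : ℕ, 1 / (n + 1 : ℂ) ^ (σ : ℂ) = ((1 / (n + 1 : ℝ) ^ σ : ℝ) : ℂ) := by
    intro n
    rw [show ((n : ℂ) + 1) = (((n : ℝ) + 1 : ℝ) : ℂ) by push_cast; ring,
      ← Complex.ofReal_cpow (by positivity) σ]
    push_cast
    ring
  have hsum : Summable (fun n : ℕ => 1 / (n + 1 : ℝ) ^ σ) := by
    have := Real.summable_one_div_nat_rpow.mpr h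
    have := (summable_nat_add_iff (f := fun n : ℕ => 1 / (n : ℝ) ^ σ) 1).mpr this
    exact this.congr fun n => by push_cast; ring_nf
  refine ⟨∑' n : ℕ, 1 / (n + 1 : ℝ) ^ σ,
    hsum.tsum_pos (fun n => by positivity) 0 (by positivity), ?_⟩
  rw [zeta_eq_tsum_one_div_nat_add_one_cpow hre, Complex.ofReal_tsum]
  exact tsum_congr hterm

lemma zeta_neg_real {σ : ℝ} (h₁ : -2 < σ) (h₂ : σ < 1) :
    ∃ N : ℝ, N < 0 ∧ riemannZeta (σ : ℂ) = (N : ℂ) := by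
  rcases lt_trichotomy σ 0 with hneg | hzero | hpos
  · -- functional equation
    set s₀ : ℝ := 1 - σ with hs₀
    have hs₀1 : 1 < s₀ := by rw [hs₀]; linarith
    have hs₀3 : s₀ < 3 := by rw [hs₀]; linarith
    obtain ⟨Z, hZpos, hZ⟩ := zeta_real_pos hs₀1
    have hfe := riemannZeta_one_sub (s := (s₀ : ℂ)) ?_ ?_
    · have hcast : (1 : ℂ) - (s₀ : ℂ) = (σ : ℂ) := by rw [hs₀]; push_cast; ring
      rw [hcast] at hfe
      set N : ℝ := 2 * (2 * π) ^ (-s₀) * Real.Gamma s₀ * Real.cos (π * s₀ / 2) * Z with hN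
      refine ⟨N, ?_, ?_⟩
      · have hcos : Real.cos (π * s₀ / 2) < 0 := by
          apply Real.cos_neg_of_pi_div_two_lt_of_lt
          · nlinarith [Real.pi_pos]
          · nlinarith [Real.pi_pos]
        have hg : 0 < Real.Gamma s₀ := Real.Gamma_pos_of_pos (by linarith)
        have hp : (0:ℝ) < (2 * π) ^ (-s₀) := Real.rpow_pos_of_pos (by positivity) _
        rw [hN]
        have hpos3 : 0 < 2 * (2 * π) ^ (-s₀) * Real.Gamma s₀ := by positivity
        exact mul_neg_of_neg_of_pos (mul_neg_of_pos_of_neg hpos3 hcos) hZpos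
      · rw [hfe, hZ, hN]
        rw [show ((2 : ℂ) * (π : ℂ)) = (((2 * π : ℝ)) : ℂ) by push_cast; ring,
          show (-(s₀ : ℂ)) = ((-s₀ : ℝ) : ℂ) by push_cast; ring,
          ← Complex.ofReal_cpow (by positivity) (-s₀), Complex.Gamma_ofReal,
          show ((π : ℂ) * (s₀ : ℂ) / 2) = (((π * s₀ / 2 : ℝ)) : ℂ) by push_cast; ring,
          ← Complex.ofReal_cos]
        push_cast
        ring
    · intro n
      intro hcon
      have := congrArg Complex.re hcon
      simp at this
      have : (0:ℝ) ≤ (n:ℝ) := Nat.cast_nonneg n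
      linarith
    · intro hcon
      have := congrArg Complex.re hcon
      simp at this
      linarith
  · refine ⟨-1/2, by norm_num, ?_⟩
    rw [hzero]
    simp only [Complex.ofReal_zero, riemannZeta_zero]
    push_cast
    norm_num
  · -- eta argument
    obtain ⟨T, hTpos, hT⟩ := etaG_real_pos hpos
    have hid := etaG_eq_full (s := (σ : ℂ)) (by simpa using hpos)
      (by intro h; have := congrArg Complex.re h; simp at this; linarith)
    have hd : (1 : ℂ) - 2 ^ (1 - (σ : ℂ)) = (((1 - 2 ^ (1 - σ) : ℝ)) : ℂ) := by
      rw [show ((1 : ℂ) - (σ : ℂ)) = ((1 - σ : ℝ) : ℂ) by push_cast; ring,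
        show ((2:ℂ)) = ((2:ℝ):ℂ) by norm_num,
        ← Complex.ofReal_cpow (by norm_num) (1 - σ)]
      push_cast
      ring
    have hdr : (1 - 2 ^ (1 - σ) : ℝ) < 0 := by
      have : (1:ℝ) < 2 ^ (1 - σ) := by
        rw [show (1:ℝ) < 2 ^ (1-σ) ↔ _ from Real.one_lt_rpow_iff_of_pos (by norm_num)]
        left; constructor <;> [norm_num; linarith]
      linarith
    have hdne : (((1 - 2 ^ (1 - σ) : ℝ)) : ℂ) ≠ 0 :=
      Complex.ofReal_ne_zero.mpr (by linarith)
    refine ⟨T / (1 - 2 ^ (1 - σ)), div_neg_of_pos_of_neg hTpos hdr, ?_⟩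
    rw [hT, hd] at hid
    rw [Complex.ofReal_div, eq_div_iff hdne, hid]
    exact mul_comm _ _

/-- For real `σ` with `-2 < σ < 1`, the value `ζ(σ)` is real and strictly negative. -/
theorem zeta_real_neg_on_interval (σ : ℝ) (h₁ : -2 < σ) (h₂ : σ < 1) :
    (riemannZeta (σ : ℂ)).im = 0 ∧ (riemannZeta (σ : ℂ)).re < 0 := by
  obtain ⟨N, hN, heq⟩ := zeta_neg_real h₁ h₂
  rw [heq]
  simp [hN]
end

section
/- For every real x > 1, ∫_x^∞ 1/(t·(t² - 1)·log t) dt = Σ_{n=1}^∞ ∫_{2n·log x}^∞ e^{-u}/u du, where the series on the right converges. -/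
open Real MeasureTheory Set Filter
lemma aux_exp_int (a : ℝ) : IntegrableOn (fun u : ℝ => Real.exp (-u)) (Set.Ioi a) := by
  simpa using exp_neg_integrableOn_Ioi a one_pos

lemma aux_int_exp {a : ℝ} (ha : 0 < a) :
    IntegrableOn (fun u : ℝ => Real.exp (-u) / u) (Set.Ioi a) := by
  refine Integrable.mono' ((aux_exp_int a).mul_const a⁻¹) ?_ ?_
  · exact (((Real.measurable_exp.comp measurable_neg).div measurable_id).aestronglyMeasurable)
  · filter_upwards [ae_restrict_mem measurableSet_Ioi] with u hu
    have hu' : a < u := hu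
    rw [Real.norm_of_nonneg (div_nonneg (Real.exp_pos _).le (ha.trans hu').le), div_eq_mul_inv]
    exact mul_le_mul_of_nonneg_left (by
      rw [inv_le_inv₀ (ha.trans hu') ha]; exact hu'.le) (Real.exp_pos _).le

lemma aux_val {a : ℝ} (ha : 0 < a) :
    ∫ u in Set.Ioi a, Real.exp (-u) / u ≤ Real.exp (-a) * a⁻¹ := by
  have h1 : ∫ u in Set.Ioi a, Real.exp (-u) * a⁻¹ = Real.exp (-a) * a⁻¹ := by
    rw [integral_mul_const, integral_exp_neg_Ioi]
  rw [← h1]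
  refine setIntegral_mono_on (aux_int_exp ha) ((aux_exp_int a).mul_const a⁻¹)
    measurableSet_Ioi ?_
  intro u hu
  have hu' : a < u := hu
  rw [div_eq_mul_inv]
  exact mul_le_mul_of_nonneg_left (by
    rw [inv_le_inv₀ (ha.trans hu') ha]; exact hu'.le) (Real.exp_pos _).le

lemma aux_g_int {x : ℝ} (hx : 1 < x) (n : ℕ) :
    IntegrableOn (fun t : ℝ => 1 / (t ^ (2*n+3) * Real.log t)) (Set.Ici x) := by
  have h0 : (0:ℝ) < x := lt_trans one_pos hx
  have hlx : 0 < Real.log x := Real.log_pos hx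
  rw [integrableOn_Ici_iff_integrableOn_Ioi]
  refine Integrable.mono'
    ((integrableOn_Ioi_rpow_of_lt (by norm_num : (-2:ℝ) < -1) h0).mul_const (Real.log x)⁻¹)
    ((measurable_const.div ((measurable_id.pow_const _).mul Real.measurable_log)).aestronglyMeasurable)
    ?_
  filter_upwards [ae_restrict_mem measurableSet_Ioi] with t ht
  have ht1 : 1 < t := hx.trans ht
  have ht0 : 0 < t := lt_trans one_pos ht1
  have hlt : 0 < Real.log t := Real.log_pos ht1
  rw [Real.norm_of_nonneg (by positivity), one_div, mul_inv,
    show t ^ (-2:ℝ) = ((t ^ (2:ℕ)):ℝ)⁻¹ by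
      rw [show (-2:ℝ) = -((2:ℕ):ℝ) by norm_num, Real.rpow_neg ht0.le, Real.rpow_natCast]]
  refine mul_le_mul ?_ ?_ (by positivity) (by positivity)
  · rw [inv_le_inv₀ (by positivity) (by positivity)]
    exact pow_le_pow_right₀ ht1.le (by omega)
  · rw [inv_le_inv₀ hlt hlx]
    exact Real.log_le_log h0 ht.le

lemma aux_ptwise (n : ℕ) {c u : ℝ} (hc : c = 2*((n:ℝ)+1)) (hu : u ≠ 0) :
    1 / (Real.exp (u/c) ^ (2*n+3) * Real.log (Real.exp (u/c))) * (Real.exp (u/c) * c⁻¹)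
      = Real.exp (-u) / u := by
  have hc0 : c ≠ 0 := by rw [hc]; positivity
  rw [Real.log_exp, ← Real.exp_nat_mul]
  have key : Real.exp (u/c) / Real.exp (((2*n+3 : ℕ) : ℝ) * (u/c)) = Real.exp (-u) := by
    rw [← Real.exp_sub]; congr 1; push_cast; subst hc; field_simp; ring
  rw [← key]
  have he1 := Real.exp_ne_zero (u/c)
  have he2 := Real.exp_ne_zero (((2*n+3 : ℕ) : ℝ) * (u/c))
  field_simp

lemma aux_subst {x : ℝ} (hx : 1 < x) (n : ℕ) :
    ∫ t in Set.Ioi x, 1 / (t ^ (2*n+3) * Real.log t)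
      = ∫ u in Set.Ioi (2*((n:ℝ)+1) * Real.log x), Real.exp (-u) / u := by
  have h0 : (0:ℝ) < x := lt_trans one_pos hx
  have hlx : 0 < Real.log x := Real.log_pos hx
  set c : ℝ := 2*((n:ℝ)+1) with hc
  have hcpos : (0:ℝ) < c := by positivity
  set a : ℝ := c * Real.log x with ha
  have hapos : 0 < a := by positivity
  set f : ℝ → ℝ := fun u => Real.exp (u/c) with hf
  set g : ℝ → ℝ := fun t => 1 / (t ^ (2*n+3) * Real.log t) with hg
  have hfa : f a = x := by
    simp only [hf, ha, mul_comm c (Real.log x), mul_div_assoc, div_self hcpos.ne',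
      mul_one, Real.exp_log h0]
  have hmono : ∀ u v : ℝ, u < v → f u < f v := fun u v huv =>
    Real.exp_lt_exp.mpr (div_lt_div_of_pos_right huv hcpos)
  have himg1 : f '' Set.Ioi a ⊆ Set.Ioi x := by
    rintro _ ⟨u, hu, rfl⟩
    exact hfa ▸ hmono a u hu
  have himg2 : f '' Set.Ici a ⊆ Set.Ici x := by
    rintro _ ⟨u, hu, rfl⟩
    rcases eq_or_lt_of_le (Set.mem_Ici.mp hu) with h | h
    · exact le_of_eq (h ▸ hfa.symm)
    · exact le_of_lt (hfa ▸ hmono a u h)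
  have hderiv : ∀ u : ℝ, HasDerivAt f (Real.exp (u/c) * c⁻¹) u := by
    intro u
    have h1 : HasDerivAt (fun u : ℝ => u / c) c⁻¹ u := by
      simpa using (hasDerivAt_id u).div_const c
    exact (Real.hasDerivAt_exp (u/c)).comp u h1
  have hcontg : ContinuousOn g (Set.Ioi x) := by
    refine ContinuousOn.div continuousOn_const
      (ContinuousOn.mul ((continuous_pow _).continuousOn)
        (Real.continuousOn_log.mono ?_)) ?_
    · intro t ht
      exact ne_of_gt (lt_trans one_pos (hx.trans ht))
    · intro t ht
      have ht1 : 1 < t := hx.trans ht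
      have : 0 < Real.log t := Real.log_pos ht1
      positivity
  have heqon : Set.EqOn (fun u : ℝ => Real.exp (-u) / u) (fun u => (g ∘ f) u * (Real.exp (u/c) * c⁻¹))
      (Set.Ioi a) := by
    intro u hu
    have hu0 : u ≠ 0 := ne_of_gt (lt_trans hapos hu)
    exact (aux_ptwise n hc hu0).symm
  have hint2 : IntegrableOn (fun u => (g ∘ f) u * (Real.exp (u/c) * c⁻¹)) (Set.Ici a) := by
    rw [integrableOn_Ici_iff_integrableOn_Ioi]
    exact (aux_int_exp hapos).congr_fun heqon measurableSet_Ioi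
  have key := integral_comp_mul_deriv_Ioi (f := f) (f' := fun u => Real.exp (u/c) * c⁻¹)
    (g := g) (a := a)
    (Real.continuous_exp.comp (continuous_id.div_const c)).continuousOn
    (Real.tendsto_exp_atTop.comp (tendsto_id.atTop_div_const hcpos))
    (fun u _ => (hderiv u).hasDerivWithinAt)
    (hcontg.mono himg1)
    ((aux_g_int hx n).mono_set himg2)
    hint2
  rw [hfa] at key
  rw [← key]
  exact (setIntegral_congr_fun measurableSet_Ioi heqon).symm


lemma aux_tsum {t : ℝ} (ht : 1 < t) :
    ∑' n : ℕ, 1 / (t ^ (2*n+3) * Real.log t) = 1 / (t * (t ^ 2 - 1) * Real.log t) := by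
  have h0 : (0:ℝ) < t := lt_trans one_pos ht
  have hL : 0 < Real.log t := Real.log_pos ht
  have h1 : (1:ℝ) < t ^ 2 := by nlinarith
  have hlt : ((t ^ 2)⁻¹ : ℝ) < 1 := by
    rw [inv_lt_one₀ (by positivity)]; exact h1
  have hrw : ∀ n : ℕ, 1 / (t ^ (2*n+3) * Real.log t)
      = (1 / (t ^ 3 * Real.log t)) * ((t ^ 2)⁻¹) ^ n := by
    intro n
    have hp : t ^ (2*n+3) = (t ^ 2) ^ n * t ^ 3 := by
      rw [← pow_mul, ← pow_add]
    rw [hp, inv_pow]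
    have h2 : ((t ^ 2) ^ n : ℝ) ≠ 0 := by positivity
    field_simp
  simp_rw [hrw]
  rw [tsum_mul_left, tsum_geometric_of_lt_one (by positivity) hlt]
  have h2 : t ^ 2 - 1 ≠ 0 := by nlinarith
  have h3 : (1 : ℝ) - (t ^ 2)⁻¹ = (t ^ 2 - 1) / t ^ 2 := by field_simp
  rw [h3, inv_div]
  field_simp

lemma aux_summable {x : ℝ} (hx : 1 < x) :
    Summable (fun n : ℕ =>
      ∫ u in Set.Ioi (2 * ((n : ℝ) + 1) * Real.log x), Real.exp (-u) / u) := by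
  have h0 : (0:ℝ) < x := lt_trans one_pos hx
  have hlx : 0 < Real.log x := Real.log_pos hx
  have hr1 : ((x ^ 2)⁻¹ : ℝ) < 1 := by
    rw [inv_lt_one₀ (by positivity)]; nlinarith
  refine Summable.of_nonneg_of_le (fun n => ?_) (fun n => ?_)
    (((summable_geometric_of_lt_one (by positivity) hr1).mul_left
      ((x ^ 2)⁻¹ * (2 * Real.log x)⁻¹)))
  · refine setIntegral_nonneg measurableSet_Ioi (fun u hu => ?_)
    have : 0 < u := lt_trans (by positivity) hu
    positivity
  · have hapos : 0 < 2 * ((n : ℝ) + 1) * Real.log x := by positivity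
    refine le_trans (aux_val hapos) ?_
    have he : Real.exp (-(2 * ((n : ℝ) + 1) * Real.log x)) = ((x ^ 2)⁻¹) ^ (n + 1) := by
      rw [show -(2 * ((n : ℝ) + 1) * Real.log x) = -(((2 * (n+1) : ℕ) : ℝ) * Real.log x)
          by push_cast; ring,
        Real.exp_neg, Real.exp_nat_mul, Real.exp_log h0, pow_mul, inv_pow]
    rw [he]
    have hinv : (2 * ((n : ℝ) + 1) * Real.log x)⁻¹ ≤ (2 * Real.log x)⁻¹ := by
      rw [inv_le_inv₀ hapos (by positivity)]
      nlinarith [Nat.cast_nonneg (α := ℝ) n]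
    calc ((x ^ 2)⁻¹) ^ (n + 1) * (2 * ((n : ℝ) + 1) * Real.log x)⁻¹
        ≤ ((x ^ 2)⁻¹) ^ (n + 1) * (2 * Real.log x)⁻¹ := by
          exact mul_le_mul_of_nonneg_left hinv (by positivity)
      _ = (x ^ 2)⁻¹ * (2 * Real.log x)⁻¹ * ((x ^ 2)⁻¹) ^ n := by ring

/-- For `x > 1`,
`∫_x^∞ dt/(t (t²-1) log t) = ∑_{n=1}^∞ ∫_{2n log x}^∞ e^{-u}/u du`,
and the series on the right converges. -/
theorem integral_eq_sum_incGamma (x : ℝ) (hx : 1 < x) :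
    Summable (fun n : ℕ =>
      ∫ u in Set.Ioi (2 * ((n : ℝ) + 1) * Real.log x), Real.exp (-u) / u) ∧
    (∫ t in Set.Ioi x, 1 / (t * (t ^ 2 - 1) * Real.log t)) =
      ∑' n : ℕ, ∫ u in Set.Ioi (2 * ((n : ℝ) + 1) * Real.log x), Real.exp (-u) / u := by
  refine ⟨aux_summable hx, ?_⟩
  have hint : ∀ n : ℕ,
      IntegrableOn (fun t : ℝ => 1 / (t ^ (2*n+3) * Real.log t)) (Set.Ioi x) :=
    fun n => (aux_g_int hx n).mono_set Set.Ioi_subset_Ici_self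
  have hnorm : ∀ n : ℕ,
      (∫ t in Set.Ioi x, ‖1 / (t ^ (2*n+3) * Real.log t)‖)
        = ∫ u in Set.Ioi (2 * ((n : ℝ) + 1) * Real.log x), Real.exp (-u) / u := by
    intro n
    rw [← aux_subst hx n]
    refine setIntegral_congr_fun measurableSet_Ioi (fun t ht => ?_)
    have ht1 : 1 < t := hx.trans ht
    have h0 : 0 < t := lt_trans one_pos ht1
    have hL : 0 < Real.log t := Real.log_pos ht1
    exact Real.norm_of_nonneg (by positivity)
  have hsum2 : Summable (fun n : ℕ =>
      ∫ t in Set.Ioi x, ‖1 / (t ^ (2*n+3) * Real.log t)‖) :=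
    (aux_summable hx).congr (fun n => (hnorm n).symm)
  calc (∫ t in Set.Ioi x, 1 / (t * (t ^ 2 - 1) * Real.log t))
      = ∫ t in Set.Ioi x, ∑' n : ℕ, 1 / (t ^ (2*n+3) * Real.log t) :=
        setIntegral_congr_fun measurableSet_Ioi
          (fun t ht => (aux_tsum (hx.trans ht)).symm)
    _ = ∑' n : ℕ, ∫ t in Set.Ioi x, 1 / (t ^ (2*n+3) * Real.log t) :=
        (integral_tsum_of_summable_integral_norm hint hsum2).symm
    _ = ∑' n : ℕ, ∫ u in Set.Ioi (2 * ((n : ℝ) + 1) * Real.log x), Real.exp (-u) / u :=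
        tsum_congr (fun n => aux_subst hx n)
end

section
/- For every real x > 1, Li(x) + ∫_x^∞ 1/(t·(t² - 1)·log t) dt = P.V. ∫_{-2}^1 x^σ/σ dσ + Σ_{n=2}^∞ ∫_{2n·log x}^∞ e^{-u}/u du, where P.V. ∫_{-2}^1 x^σ/σ dσ := lim_{ε→0⁺} ( ∫_{-2}^{-ε} x^σ/σ dσ + ∫_{ε}^{1} x^σ/σ dσ ) and Li(x) := lim_{ε→0⁺} ( ∫_0^{1-ε} dt/log t + ∫_{1+ε}^{x} dt/log t ). -/
open Filter Topology

open Set MeasureTheory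

set_option maxHeartbeats 1000000

noncomputable def ee : ℝ → ℝ := fun v => Real.exp v / v

lemma ee_meas : Measurable ee := Real.measurable_exp.div measurable_id

lemma E_integrableOn {a : ℝ} (ha : 0 < a) :
    IntegrableOn (fun u => Real.exp (-u) / u) (Ioi a) := by
  have h1 : IntegrableOn (fun u => Real.exp (-1*u) / a) (Ioi a) :=
    (exp_neg_integrableOn_Ioi a one_pos).div_const a
  refine Integrable.mono h1 ((Real.measurable_exp.comp measurable_neg).div measurable_id).aestronglyMeasurable ?_
  filter_upwards [ae_restrict_mem measurableSet_Ioi] with u hu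
  have hu1 : a < u := mem_Ioi.mp hu
  have hu' : 0 < u := ha.trans hu1
  simp only [Real.norm_eq_abs, neg_one_mul]
  rw [abs_of_nonneg (by positivity), abs_of_nonneg (by positivity)]
  exact div_le_div_of_nonneg_left (Real.exp_pos _).le ha hu1.le

lemma E_nonneg {a : ℝ} (ha : 0 < a) : 0 ≤ ∫ u in Ioi a, Real.exp (-u) / u := by
  refine setIntegral_nonneg measurableSet_Ioi fun u hu => ?_
  have : 0 < u := ha.trans (mem_Ioi.mp hu)
  positivity

lemma E_le {a : ℝ} (ha : 0 < a) :
    (∫ u in Ioi a, Real.exp (-u) / u) ≤ Real.exp (-a) / a := by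
  have h2 : IntegrableOn (fun u => Real.exp (-1*u) / a) (Ioi a) :=
    (exp_neg_integrableOn_Ioi a one_pos).div_const a
  have hmono : ∀ u ∈ Ioi a, Real.exp (-u) / u ≤ Real.exp (-1*u) / a := by
    intro u hu
    simp only [neg_one_mul]
    exact div_le_div_of_nonneg_left (Real.exp_pos _).le ha (le_of_lt (mem_Ioi.mp hu))
  have h3 := setIntegral_mono_on (E_integrableOn ha) h2 measurableSet_Ioi hmono
  refine h3.trans ?_
  simp only [neg_one_mul]
  rw [integral_div, integral_exp_neg_Ioi]

lemma ee_integrableOn_Iic {a : ℝ} (ha : 0 < a) : IntegrableOn ee (Iic (-a)) := by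
  have h1 : IntegrableOn (fun v => Real.exp v / a) (Iic (-a)) :=
    (integrableOn_exp_Iic (-a)).div_const a
  refine Integrable.mono h1 ee_meas.aestronglyMeasurable ?_
  filter_upwards [ae_restrict_mem measurableSet_Iic] with v hv
  have hv1 : v ≤ -a := mem_Iic.mp hv
  have hv' : v < 0 := lt_of_le_of_lt hv1 (by linarith)
  simp only [Real.norm_eq_abs, ee]
  rw [abs_div, abs_of_nonneg (Real.exp_pos v).le, abs_of_nonneg (by positivity :(0:ℝ) ≤ Real.exp v / a),
    abs_of_neg hv']
  exact div_le_div_of_nonneg_left (Real.exp_pos _).le ha (by linarith)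

lemma ee_integral_Iio {a : ℝ} (ha : 0 < a) :
    (∫ v in Iio (-a), ee v) = -∫ u in Ioi a, Real.exp (-u) / u := by
  rw [setIntegral_congr_set Iio_ae_eq_Iic]
  have h := integral_comp_neg_Iic (-a) (fun u => ee (-u))
  simp only [neg_neg] at h
  rw [h]
  rw [← integral_neg]
  refine setIntegral_congr_fun measurableSet_Ioi fun u hu => ?_
  simp [ee, div_neg]

lemma image_mul_log {x p : ℝ} (hx : 1 < x) (hp : 0 < p) :
    (fun t => p * Real.log t) '' Ioi x = Ioi (p * Real.log x) := by
  have hx0 : 0 < x := lt_trans one_pos hx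
  ext u
  constructor
  · rintro ⟨t, ht, rfl⟩
    have : Real.log x < Real.log t := Real.log_lt_log hx0 ht
    exact mul_lt_mul_of_pos_left this hp
  · intro hu
    refine ⟨Real.exp (u / p), ?_, ?_⟩
    · have : Real.log x < u / p := (lt_div_iff₀' hp).mpr hu
      calc x = Real.exp (Real.log x) := (Real.exp_log hx0).symm
        _ < Real.exp (u / p) := Real.exp_lt_exp.mpr this
    · simp only []
      rw [Real.log_exp, mul_div_cancel₀ _ hp.ne']

lemma subst_p {x p : ℝ} (hx : 1 < x) (hp : 0 < p) :
    (∫ u in Ioi (p * Real.log x), Real.exp (-u) / u) =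
      ∫ t in Ioi x, t ^ (-p) / (t * Real.log t) := by
  have hx0 : 0 < x := lt_trans one_pos hx
  have hderiv : ∀ t ∈ Ioi x, HasDerivWithinAt (fun t => p * Real.log t) (p / t) (Ioi x) t := by
    intro t ht
    have h0 : t ≠ 0 := (hx0.trans ht).ne'
    have := (Real.hasDerivAt_log h0).const_mul p
    simpa [div_eq_mul_inv] using this.hasDerivWithinAt
  have hmono : StrictMonoOn (fun t => p * Real.log t) (Ioi x) := by
    intro s hs t ht hst
    exact mul_lt_mul_of_pos_left (Real.log_lt_log (hx0.trans hs) hst) hp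
  have hinj : InjOn (fun t => p * Real.log t) (Ioi x) := hmono.injOn
  have key := integral_image_eq_integral_abs_deriv_smul measurableSet_Ioi hderiv hinj
      (fun u => Real.exp (-u) / u)
  rw [image_mul_log hx hp] at key
  rw [key]
  refine setIntegral_congr_fun measurableSet_Ioi fun t ht => ?_
  have ht0 : 0 < t := hx0.trans ht
  have hlt : 0 < Real.log t := Real.log_pos (hx.trans ht)
  have habs : |p / t| = p / t := abs_of_pos (by positivity)
  rw [smul_eq_mul, habs, Real.rpow_def_of_pos ht0]
  rw [show Real.log t * -p = -(p * Real.log t) by ring]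
  field_simp

lemma F_integrableOn {x p : ℝ} (hx : 1 < x) (hp : 0 < p) :
    IntegrableOn (fun t => t ^ (-p) / (t * Real.log t)) (Ioi x) := by
  have hx0 : 0 < x := lt_trans one_pos hx
  have hlx : 0 < Real.log x := Real.log_pos hx
  have h1 : IntegrableOn (fun t : ℝ => t ^ (-(p+1)) / Real.log x) (Ioi x) :=
    (integrableOn_Ioi_rpow_of_lt (by linarith) hx0).div_const _
  have hcont : ContinuousOn (fun t : ℝ => t ^ (-p) / (t * Real.log t)) (Ioi x) := by
    refine ContinuousOn.div ?_ ?_ ?_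
    · exact continuousOn_id.rpow_const fun t ht => Or.inl (hx0.trans ht).ne'
    · exact continuousOn_id.mul
        (Real.continuousOn_log.mono fun t ht => (hx0.trans ht).ne')
    · intro t ht
      have ht0 : 0 < t := hx0.trans ht
      have : 0 < Real.log t := Real.log_pos (hx.trans ht)
      positivity
  refine Integrable.mono h1 (hcont.aestronglyMeasurable measurableSet_Ioi) ?_
  filter_upwards [ae_restrict_mem measurableSet_Ioi] with t ht
  have ht0 : 0 < t := hx0.trans (mem_Ioi.mp ht)
  have hlt : 0 < Real.log t := Real.log_pos (hx.trans (mem_Ioi.mp ht))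
  have hrp : (0:ℝ) < t ^ (-p) := Real.rpow_pos_of_pos ht0 _
  rw [Real.norm_eq_abs, Real.norm_eq_abs, abs_of_pos (by positivity), abs_of_pos (by positivity)]
  have h2 : t ^ (-(p+1)) / Real.log x = t ^ (-p) / (t * Real.log x) := by
    rw [show -(p+1) = -p + (-1) from by ring, Real.rpow_add ht0, Real.rpow_neg_one]
    field_simp
  rw [h2]
  refine div_le_div_of_nonneg_left hrp.le (by positivity) ?_
  have hll : Real.log x ≤ Real.log t := Real.log_le_log hx0 (mem_Ioi.mp ht).le
  nlinarith

lemma stepC {x : ℝ} (hx : 1 < x) :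
    (∫ t in Ioi x, 1 / (t * (t ^ 2 - 1) * Real.log t)) =
      ∑' k : ℕ, ∫ u in Ioi (2 * ((k : ℝ) + 1) * Real.log x), Real.exp (-u) / u := by
  have hx0 : 0 < x := lt_trans one_pos hx
  have hc : 0 < Real.log x := Real.log_pos hx
  set c := Real.log x with hcdef
  set F : ℕ → ℝ → ℝ := fun k t => t ^ (-(2 * (k : ℝ) + 2)) / (t * Real.log t) with hF
  have hp : ∀ k : ℕ, (0:ℝ) < 2 * (k:ℝ) + 2 := fun k => by positivity
  have hsub : ∀ k : ℕ, (∫ t in Ioi x, F k t)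
      = ∫ u in Ioi (2 * ((k:ℝ) + 1) * c), Real.exp (-u) / u := by
    intro k
    rw [show (2 * ((k:ℝ) + 1)) * c = (2 * (k:ℝ) + 2) * c by ring, hcdef]
    exact (subst_p hx (hp k)).symm
  have hFint : ∀ k, IntegrableOn (F k) (Ioi x) := fun k => F_integrableOn hx (hp k)
  have hFpos : ∀ k : ℕ, ∀ t ∈ Ioi x, 0 ≤ F k t := by
    intro k t ht
    have ht0 : 0 < t := hx0.trans ht
    have hlt : 0 < Real.log t := Real.log_pos (hx.trans ht)
    have hrp : (0:ℝ) < t ^ (-(2 * (k:ℝ) + 2)) := Real.rpow_pos_of_pos ht0 _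
    exact (div_pos hrp (by positivity)).le
  have hnorm : ∀ k, (∫ t in Ioi x, ‖F k t‖)
      = ∫ u in Ioi (2 * ((k:ℝ) + 1) * c), Real.exp (-u) / u := by
    intro k
    rw [← hsub k]
    exact setIntegral_congr_fun measurableSet_Ioi fun t ht =>
      Real.norm_of_nonneg (hFpos k t ht)
  have hsum : Summable fun k => ∫ t in Ioi x, ‖F k t‖ := by
    have hgeo : Summable fun k : ℕ =>
        (Real.exp (-(2*c)))^k * (Real.exp (-(2*c)) / (2*c)) := by
      refine Summable.mul_right _ (summable_geometric_of_lt_one (Real.exp_pos _).le ?_)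
      exact Real.exp_lt_one_iff.mpr (by linarith)
    refine Summable.of_nonneg_of_le
      (fun k => integral_nonneg fun t => norm_nonneg _) (fun k => ?_) hgeo
    rw [hnorm k]
    have hkc : (0:ℝ) < 2 * ((k:ℝ) + 1) * c := by positivity
    refine (E_le hkc).trans ?_
    have h1 : Real.exp (-(2 * ((k:ℝ)+1) * c)) = (Real.exp (-(2*c)))^(k+1) := by
      rw [← Real.exp_nat_mul]
      congr 1
      push_cast
      ring
    have h2 : Real.exp (-(2 * ((k:ℝ)+1) * c)) / (2 * ((k:ℝ)+1) * c)
        ≤ Real.exp (-(2 * ((k:ℝ)+1) * c)) / (2*c) := by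
      refine div_le_div_of_nonneg_left (Real.exp_pos _).le (by positivity) ?_
      nlinarith [show (0:ℝ) ≤ (k:ℝ) from Nat.cast_nonneg k]
    refine h2.trans ?_
    rw [h1, pow_succ]
    rw [mul_div_assoc]
  have hpt : ∀ t ∈ Ioi x, (∑' k, F k t) = 1 / (t * (t ^ 2 - 1) * Real.log t) := by
    intro t ht
    have ht1 : 1 < t := hx.trans ht
    have ht0 : 0 < t := lt_trans one_pos ht1
    have hlt : 0 < Real.log t := Real.log_pos ht1
    have hsq : 1 < t ^ 2 := by nlinarith
    set r : ℝ := (t ^ 2)⁻¹ with hr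
    have hr0 : 0 < r := by positivity
    have hr1 : r < 1 := by
      rw [hr, inv_lt_one_iff₀]; right; exact hsq
    have hFk : ∀ k : ℕ, F k t = r ^ k * (r * (1 / (t * Real.log t))) := by
      intro k
      have e1 : t ^ (-(2 * (k:ℝ) + 2)) = (t ^ (2*k+2 : ℕ))⁻¹ := by
        rw [show -(2 * (k:ℝ) + 2) = -((2*k+2 : ℕ) : ℝ) by push_cast; ring,
          Real.rpow_neg ht0.le, Real.rpow_natCast]
      have e2 : (t ^ (2*k+2 : ℕ))⁻¹ = r ^ (k+1) := by
        rw [hr, inv_pow, ← pow_mul]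
        norm_num [Nat.mul_succ]
      rw [hF]
      simp only []
      rw [e1, e2, pow_succ, div_eq_mul_one_div]
      ring
    calc (∑' k, F k t) = ∑' k : ℕ, r ^ k * (r * (1 / (t * Real.log t))) :=
          tsum_congr hFk
      _ = (1 - r)⁻¹ * (r * (1 / (t * Real.log t))) := by
          rw [tsum_mul_right, tsum_geometric_of_lt_one hr0.le hr1]
      _ = 1 / (t * (t ^ 2 - 1) * Real.log t) := by
          rw [hr]
          have h2 : t ^ 2 - 1 ≠ 0 := by nlinarith
          field_simp
  calc (∫ t in Ioi x, 1 / (t * (t ^ 2 - 1) * Real.log t))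
      = ∫ t in Ioi x, ∑' k, F k t := by
        refine setIntegral_congr_fun measurableSet_Ioi fun t ht => (hpt t ht).symm
    _ = ∑' k, ∫ t in Ioi x, F k t :=
        (integral_tsum_of_summable_integral_norm hFint hsum).symm
    _ = ∑' k : ℕ, ∫ u in Ioi (2 * ((k:ℝ) + 1) * c), Real.exp (-u) / u :=
        tsum_congr hsub

lemma pv_subst {x : ℝ} (hx : 0 < x) (hc : Real.log x ≠ 0) (a b : ℝ) :
    (∫ σ in a..b, x ^ σ / σ) = ∫ v in (Real.log x * a)..(Real.log x * b), ee v := by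
  rw [← intervalIntegral.smul_integral_comp_mul_left ee (Real.log x), smul_eq_mul,
    ← intervalIntegral.integral_const_mul]
  refine intervalIntegral.integral_congr fun σ _ => ?_
  rw [Real.rpow_def_of_pos hx]
  show Real.exp (Real.log x * σ) / σ
      = Real.log x * (Real.exp (Real.log x * σ) / (Real.log x * σ))
  rw [mul_div_assoc', mul_div_mul_left _ _ hc]

lemma exp_subst {a b : ℝ} (ha : 0 < a) (hb : 0 < b) :
    (∫ t in Real.exp a..Real.exp b, 1 / Real.log t) = ∫ v in a..b, ee v := by
  have hgc : ContinuousOn (fun u : ℝ => 1 / Real.log u) {u : ℝ | 1 < u} := by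
    refine continuousOn_const.div
      (Real.continuousOn_log.mono fun u hu => ?_) fun u hu => ?_
    · exact ne_of_gt (lt_trans one_pos hu)
    · exact ne_of_gt (Real.log_pos hu)
  have himg : Real.exp '' (Set.uIcc a b) ⊆ {u : ℝ | 1 < u} := by
    rintro u ⟨v, hv, rfl⟩
    have : 0 < v := lt_of_lt_of_le (lt_min ha hb) (hv.1)
    exact Real.one_lt_exp_iff.mpr this
  have key := intervalIntegral.integral_comp_smul_deriv'
    (f := Real.exp) (f' := Real.exp) (g := fun u => 1 / Real.log u) (a := a) (b := b)
    (fun v _ => Real.hasDerivAt_exp v) Real.continuous_exp.continuousOn (hgc.mono himg)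
  rw [← key]
  refine intervalIntegral.integral_congr fun v _ => ?_
  simp only [Function.comp, smul_eq_mul, Real.log_exp, ee, mul_one_div]

lemma exp_subst_Iio {a : ℝ} :
    (∫ t in Ioo (0:ℝ) (Real.exp a), 1 / Real.log t) = ∫ v in Iio a, ee v := by
  have himg : Real.exp '' Iio a = Ioo 0 (Real.exp a) := by
    ext u
    constructor
    · rintro ⟨v, hv, rfl⟩
      exact ⟨Real.exp_pos v, Real.exp_lt_exp.mpr hv⟩
    · rintro ⟨hu0, hua⟩
      exact ⟨Real.log u, (Real.log_lt_iff_lt_exp hu0).mpr hua, Real.exp_log hu0⟩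
  have key := integral_image_eq_integral_abs_deriv_smul (s := Iio a)
    (f := Real.exp) (f' := Real.exp) measurableSet_Iio
    (fun v _ => (Real.hasDerivAt_exp v).hasDerivWithinAt)
    (Real.exp_injective.injOn) (fun u => 1 / Real.log u)
  rw [himg] at key
  rw [key]
  refine setIntegral_congr_fun measurableSet_Iio fun v _ => ?_
  rw [abs_of_pos (Real.exp_pos v), smul_eq_mul, Real.log_exp, ee, mul_one_div]

lemma log_bounds {ε : ℝ} (h0 : 0 < ε) (h2 : ε ≤ 1/2) :
    ε ≤ -Real.log (1-ε) ∧ -Real.log (1-ε) ≤ 2*ε ∧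
    ε/2 ≤ Real.log (1+ε) ∧ Real.log (1+ε) ≤ -Real.log (1-ε) ∧
    -Real.log (1-ε) - Real.log (1+ε) ≤ 2*ε^2 := by
  have h1e : (0:ℝ) < 1 - ε := by linarith
  have h1e' : (0:ℝ) < 1 + ε := by linarith
  have hsq : (0:ℝ) < 1 - ε^2 := by nlinarith
  have hA := Real.log_le_sub_one_of_pos h1e
  have hB := Real.log_le_sub_one_of_pos (inv_pos.mpr h1e)
  rw [Real.log_inv] at hB
  have hC := Real.log_le_sub_one_of_pos (inv_pos.mpr h1e')
  rw [Real.log_inv] at hC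
  have hE := Real.log_le_sub_one_of_pos (inv_pos.mpr hsq)
  rw [Real.log_inv] at hE
  have hF := Real.log_le_sub_one_of_pos hsq
  have hmul : Real.log (1-ε) + Real.log (1+ε) = Real.log (1-ε^2) := by
    rw [← Real.log_mul h1e.ne' h1e'.ne']
    ring_nf
  have hinv1 : (1-ε)⁻¹ - 1 = ε/(1-ε) := by field_simp; ring
  have hinv2 : (1+ε)⁻¹ - 1 = -(ε/(1+ε)) := by field_simp; ring
  have hinv3 : (1-ε^2)⁻¹ - 1 = ε^2/(1-ε^2) := by field_simp; ring
  have hd1 : ε/(1-ε) ≤ 2*ε := (div_le_iff₀ h1e).mpr (by nlinarith)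
  have hd2 : ε/2 ≤ ε/(1+ε) := by
    rw [div_le_div_iff₀ two_pos h1e']
    nlinarith
  have hq14 : ε^2 ≤ 1/4 := by nlinarith
  have hd3 : ε^2/(1-ε^2) ≤ 2*ε^2 := (div_le_iff₀ hsq).mpr (by nlinarith [sq_nonneg ε])
  refine ⟨by linarith, by linarith, by linarith, by nlinarith, by linarith⟩

lemma q_bound {v : ℝ} (h0 : 0 ≤ v) :
    0 ≤ (Real.exp v - Real.exp (-v))/v ∧
      (Real.exp v - Real.exp (-v))/v ≤ 2 * Real.exp (2*v) := by
  rcases eq_or_lt_of_le h0 with rfl | hv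
  · simp
  · have hle : Real.exp (-v) ≤ Real.exp v := Real.exp_le_exp.mpr (by linarith)
    have hmul : Real.exp (-(2*v)) * Real.exp (2*v) = 1 := by
      rw [← Real.exp_add]; simp
    have hone : Real.exp (-v) ≤ 1 := Real.exp_le_one_iff.mpr (by linarith)
    have hmul2 : Real.exp (-v) * Real.exp (2*v) = Real.exp v := by
      rw [← Real.exp_add]; ring_nf
    have h1 : Real.exp v - Real.exp (-v) ≤ 2*v*Real.exp (2*v) := by
      nlinarith [Real.add_one_le_exp (-(2*v)), Real.exp_pos (2*v), Real.exp_pos (-v),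
        Real.exp_pos v]
    constructor
    · exact div_nonneg (by linarith) h0
    · rw [div_le_iff₀ hv]
      nlinarith

lemma E_summable {x : ℝ} (hx : 1 < x) :
    Summable (fun k : ℕ => ∫ u in Ioi (2*((k:ℝ)+1)*Real.log x), Real.exp (-u)/u) := by
  have hc : 0 < Real.log x := Real.log_pos hx
  set c := Real.log x
  have hgeo : Summable fun k : ℕ =>
      (Real.exp (-(2*c)))^k * (Real.exp (-(2*c)) / (2*c)) := by
    refine Summable.mul_right _ (summable_geometric_of_lt_one (Real.exp_pos _).le ?_)
    exact Real.exp_lt_one_iff.mpr (by linarith)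
  refine Summable.of_nonneg_of_le (fun k => E_nonneg (by positivity)) (fun k => ?_) hgeo
  have hkc : (0:ℝ) < 2 * ((k:ℝ) + 1) * c := by positivity
  refine (E_le hkc).trans ?_
  have h1 : Real.exp (-(2 * ((k:ℝ)+1) * c)) = (Real.exp (-(2*c)))^(k+1) := by
    rw [← Real.exp_nat_mul]
    congr 1
    push_cast
    ring
  have h2 : Real.exp (-(2 * ((k:ℝ)+1) * c)) / (2 * ((k:ℝ)+1) * c)
      ≤ Real.exp (-(2 * ((k:ℝ)+1) * c)) / (2*c) := by
    refine div_le_div_of_nonneg_left (Real.exp_pos _).le (by positivity) ?_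
    nlinarith [show (0:ℝ) ≤ (k:ℝ) from Nat.cast_nonneg k]
  refine h2.trans ?_
  rw [h1, pow_succ, mul_div_assoc]

/-- For `x > 1`,
`Li(x) + ∫_x^∞ dt/(t (t²-1) log t) = P.V. ∫_{-2}^1 x^σ/σ dσ + ∑_{n=2}^∞ Γ(0, 2n log x)`,
where `Li(x)` and the principal value are the stated limits `L` and `P`. -/
theorem li_add_integral_eq_pv_add_sum (x : ℝ) (hx : 1 < x) :
    ∃ L P : ℝ,
      Tendsto (fun ε : ℝ =>
          (∫ t in (0 : ℝ)..(1 - ε), 1 / Real.log t) +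
            ∫ t in (1 + ε)..x, 1 / Real.log t)
        (𝓝[>] 0) (𝓝 L) ∧
      Tendsto (fun ε : ℝ =>
          (∫ σ in (-2 : ℝ)..(-ε), x ^ σ / σ) + ∫ σ in ε..(1 : ℝ), x ^ σ / σ)
        (𝓝[>] 0) (𝓝 P) ∧
      L + (∫ t in Set.Ioi x, 1 / (t * (t ^ 2 - 1) * Real.log t)) =
        P + ∑' n : ℕ,
          ∫ u in Set.Ioi (2 * ((n : ℝ) + 2) * Real.log x), Real.exp (-u) / u := by
  have hx0 : 0 < x := lt_trans one_pos hx
  have hc : 0 < Real.log x := Real.log_pos hx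
  set c := Real.log x with hcdef
  set q : ℝ → ℝ := fun v => (Real.exp v - Real.exp (-v)) / v with hq
  set K : ℝ := ∫ v in Iio (-c), ee v with hK
  set M : ℝ := K + ∫ v in (0:ℝ)..c, q v with hM
  set E2 : ℝ := ∫ u in Ioi (2*c), Real.exp (-u) / u with hE2
  set W : ℝ → ℝ := fun t => (∫ v in Iio (-t), ee v) + ∫ v in t..c, ee v with hW
  -- continuity / integrability helpers
  have heeC : ContinuousOn ee {v : ℝ | v ≠ 0} :=
    Real.continuous_exp.continuousOn.div continuousOn_id fun v hv => hv
  have hII : ∀ a b : ℝ, 0 < a → 0 < b → IntervalIntegrable ee volume a b := by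
    intro a b ha hb
    refine (heeC.mono fun v hv => ?_).intervalIntegrable
    have : 0 < v := lt_of_lt_of_le (lt_min ha hb) hv.1
    exact this.ne'
  have hIIneg : ∀ a b : ℝ, 0 < a → 0 < b →
      IntervalIntegrable (fun v => ee (-v)) volume a b := by
    intro a b ha hb
    refine ContinuousOn.intervalIntegrable ?_
    refine (heeC.comp continuous_neg.continuousOn fun v hv => ?_)
    have : 0 < v := lt_of_lt_of_le (lt_min ha hb) hv.1
    exact (neg_ne_zero.mpr this.ne')
  have hq_meas : Measurable q :=
    (Real.measurable_exp.sub (Real.measurable_exp.comp measurable_neg)).div measurable_id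
  have hq_intOn : IntegrableOn q (Ioc 0 c) := by
    refine Measure.integrableOn_of_bounded (M := 2*Real.exp (2*c)) measure_Ioc_lt_top.ne
      hq_meas.aestronglyMeasurable ?_
    filter_upwards [ae_restrict_mem measurableSet_Ioc] with v hv
    obtain ⟨h0v, hvc⟩ := hv
    obtain ⟨hq0, hq1⟩ := q_bound h0v.le
    rw [Real.norm_eq_abs, abs_of_nonneg hq0]
    refine hq1.trans ?_
    have := Real.exp_le_exp.mpr (by linarith : 2*v ≤ 2*c)
    linarith
  have hq_II : ∀ a b : ℝ, 0 ≤ a → b ≤ c → a ≤ b → IntervalIntegrable q volume a b := by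
    intro a b ha hb hab
    rw [intervalIntegrable_iff, uIoc_of_le hab]
    exact hq_intOn.mono_set (Ioc_subset_Ioc ha hb)
  -- the symmetric principal value W tends to M
  have hWeq : ∀ t ∈ Ioo (0:ℝ) c, W t = M - ∫ v in (0:ℝ)..t, q v := by
    intro t ht
    obtain ⟨ht0, htc⟩ := ht
    have hsplit : (∫ v in Iio (-t), ee v) = K + ∫ v in (-c)..(-t), ee v := by
      have h1 : IntegrableOn ee (Iic (-t)) := ee_integrableOn_Iic ht0
      have h2 : IntegrableOn ee (Iic (-c)) := ee_integrableOn_Iic hc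
      have h3 := intervalIntegral.integral_Iic_sub_Iic h2 h1
      have h4 : (∫ v in Iio (-t), ee v) = ∫ v in Iic (-t), ee v :=
        setIntegral_congr_set Iio_ae_eq_Iic
      have h5 : K = ∫ v in Iic (-c), ee v := by
        rw [hK]; exact setIntegral_congr_set Iio_ae_eq_Iic
      rw [h4, h5]; linarith
    have hneg : (∫ v in (-c)..(-t), ee v) = ∫ v in t..c, ee (-v) := by
      rw [intervalIntegral.integral_comp_neg fun v => ee v]
    have hadd : (∫ v in t..c, ee (-v)) + (∫ v in t..c, ee v) = ∫ v in t..c, q v := by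
      rw [← intervalIntegral.integral_add (hIIneg t c ht0 (by linarith)) (hII t c ht0 (by linarith))]
      refine intervalIntegral.integral_congr fun v _ => ?_
      show ee (-v) + ee v = q v
      simp only [hq, ee, div_neg, sub_div]
      ring
    have hqsplit : (∫ v in t..c, q v) = (∫ v in (0:ℝ)..c, q v) - ∫ v in (0:ℝ)..t, q v := by
      have := intervalIntegral.integral_add_adjacent_intervals
        (hq_II 0 t le_rfl htc.le ht0.le) (hq_II t c ht0.le le_rfl htc.le)
      linarith
    rw [hW]
    simp only []
    rw [hsplit, hneg, hM]
    linarith [hadd, hqsplit]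
  have hsmall : Tendsto (fun t => ∫ v in (0:ℝ)..t, q v) (𝓝[>] 0) (𝓝 0) := by
    have hbound : ∀ᶠ t in 𝓝[>] (0:ℝ), ‖∫ v in (0:ℝ)..t, q v‖ ≤ 2*Real.exp (2*c) * |t| := by
      filter_upwards [Ioo_mem_nhdsGT_of_mem (Set.mem_Ico.mpr ⟨le_refl (0:ℝ), hc⟩)] with t ht
      have h := intervalIntegral.norm_integral_le_of_norm_le_const (C := 2*Real.exp (2*c))
        (f := q) (a := 0) (b := t) ?_
      · simpa using h
      · intro v hv
        rw [uIoc_of_le ht.1.le] at hv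
        obtain ⟨hq0, hq1⟩ := q_bound hv.1.le
        rw [Real.norm_eq_abs, abs_of_nonneg hq0]
        refine hq1.trans ?_
        have := Real.exp_le_exp.mpr (by nlinarith [ht.2, hv.2] : 2*v ≤ 2*c)
        linarith
    refine squeeze_zero_norm' hbound ?_
    have : Tendsto (fun t : ℝ => 2*Real.exp (2*c) * |t|) (𝓝 0) (𝓝 (2*Real.exp (2*c) * |0|)) :=
      (continuous_const.mul (continuous_abs)).tendsto 0
    simpa using this.mono_left nhdsWithin_le_nhds
  have hWlim : Tendsto W (𝓝[>] 0) (𝓝 M) := by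
    have h1 : Tendsto (fun t => M - ∫ v in (0:ℝ)..t, q v) (𝓝[>] 0) (𝓝 M) := by
      simpa using (tendsto_const_nhds (x := M)).sub hsmall
    refine h1.congr' ?_
    filter_upwards [Ioo_mem_nhdsGT_of_mem (Set.mem_Ico.mpr ⟨le_refl (0:ℝ), hc⟩)] with t ht
    exact (hWeq t ht).symm
  -- splitting of the improper integral over `Iio`
  have hIioSplit : ∀ s : ℝ, 0 < s →
      (∫ v in Iio (-s), ee v) = (∫ v in Iio (-(2*c)), ee v) + ∫ v in (-(2*c))..(-s), ee v := by
    intro s hs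
    have h1 : IntegrableOn ee (Iic (-s)) := ee_integrableOn_Iic hs
    have h2 : IntegrableOn ee (Iic (-(2*c))) := ee_integrableOn_Iic (by positivity)
    have h3 := intervalIntegral.integral_Iic_sub_Iic h2 h1
    have h4 : (∫ v in Iio (-s), ee v) = ∫ v in Iic (-s), ee v :=
      setIntegral_congr_set Iio_ae_eq_Iic
    have h5 : (∫ v in Iio (-(2*c)), ee v) = ∫ v in Iic (-(2*c)), ee v :=
      setIntegral_congr_set Iio_ae_eq_Iic
    rw [h4, h5]; linarith
  have hIio2c : (∫ v in Iio (-(2*c)), ee v) = -E2 := by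
    rw [hE2]; exact ee_integral_Iio (by positivity)
  -- PV side
  have hgW : ∀ ε ∈ Ioo (0:ℝ) 1,
      (∫ σ in (-2:ℝ)..(-ε), x ^ σ / σ) + (∫ σ in ε..(1:ℝ), x ^ σ / σ)
        = W (ε*c) + E2 := by
    intro ε hε
    have hεc : 0 < ε * c := mul_pos hε.1 hc
    have e1 : (∫ σ in (-2:ℝ)..(-ε), x ^ σ / σ) = ∫ v in (-(2*c))..(-(ε*c)), ee v := by
      rw [pv_subst hx0 hc.ne' (-2) (-ε)]
      norm_num [hcdef]
      ring_nf
    have e2 : (∫ σ in ε..(1:ℝ), x ^ σ / σ) = ∫ v in (ε*c)..c, ee v := by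
      rw [pv_subst hx0 hc.ne' ε 1]
      rw [mul_one, mul_comm]
    have e3 := hIioSplit (ε*c) hεc
    rw [e1, e2, hW]
    simp only []
    rw [e3, hIio2c]
    ring
  have htc : Tendsto (fun ε : ℝ => ε * c) (𝓝[>] 0) (𝓝[>] 0) := by
    refine tendsto_nhdsWithin_of_tendsto_nhds_of_eventually_within _ ?_ ?_
    · have : Tendsto (fun ε : ℝ => ε * c) (𝓝 0) (𝓝 (0 * c)) :=
        (continuous_id.mul continuous_const).tendsto 0
      simpa using this.mono_left nhdsWithin_le_nhds
    · filter_upwards [self_mem_nhdsWithin] with ε hε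
      exact mul_pos hε hc
  have hPlim : Tendsto (fun ε : ℝ =>
      (∫ σ in (-2:ℝ)..(-ε), x ^ σ / σ) + ∫ σ in ε..(1:ℝ), x ^ σ / σ)
      (𝓝[>] 0) (𝓝 (M + E2)) := by
    have h1 : Tendsto (fun ε : ℝ => W (ε*c) + E2) (𝓝[>] 0) (𝓝 (M + E2)) :=
      (hWlim.comp htc).add tendsto_const_nhds
    refine h1.congr' ?_
    filter_upwards [Ioo_mem_nhdsGT_of_mem (Set.mem_Ico.mpr ⟨le_refl (0:ℝ), one_pos⟩)] with ε hε
    exact (hgW ε hε).symm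
  -- Li side
  set A : ℝ → ℝ := fun ε => -Real.log (1-ε) with hA
  set B : ℝ → ℝ := fun ε => Real.log (1+ε) with hB
  set δ : ℝ := min (1/2) (c/2) with hδ
  have hδ0 : 0 < δ := lt_min (by norm_num) (by positivity)
  have hfW : ∀ ε ∈ Ioo (0:ℝ) δ,
      (∫ t in (0:ℝ)..(1-ε), 1 / Real.log t) + (∫ t in (1+ε)..x, 1 / Real.log t)
        = W (A ε) + ∫ v in (B ε)..(A ε), ee v := by
    intro ε hε
    obtain ⟨hε0, hεδ⟩ := hε
    have hεh : ε ≤ 1/2 := le_trans hεδ.le (min_le_left _ _)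
    have hεc : ε < c/2 := lt_of_lt_of_le hεδ (min_le_right _ _)
    obtain ⟨hb1, hb2, hb3, hb4, hb5⟩ := log_bounds hε0 hεh
    have hA0 : 0 < A ε := lt_of_lt_of_le hε0 hb1
    have hB0 : 0 < B ε := lt_of_lt_of_le (by linarith) hb3
    have hAc : A ε < c := lt_of_le_of_lt hb2 (by linarith)
    have e1 : (∫ t in (0:ℝ)..(1-ε), 1 / Real.log t) = ∫ v in Iio (-(A ε)), ee v := by
      rw [intervalIntegral.integral_of_le (by linarith : (0:ℝ) ≤ 1-ε),
        ← setIntegral_congr_set Ioo_ae_eq_Ioc,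
        show (1-ε) = Real.exp (Real.log (1-ε)) from (Real.exp_log (by linarith)).symm,
        exp_subst_Iio]
      rw [hA, neg_neg]
    have e2 : (∫ t in (1+ε)..x, 1 / Real.log t) = ∫ v in (B ε)..c, ee v := by
      rw [show (1+ε) = Real.exp (B ε) from (Real.exp_log (by linarith)).symm,
        show x = Real.exp c from (Real.exp_log hx0).symm,
        exp_subst hB0 hc]
    have e3 : (∫ v in (B ε)..c, ee v)
        = (∫ v in (B ε)..(A ε), ee v) + ∫ v in (A ε)..c, ee v :=
      (intervalIntegral.integral_add_adjacent_intervals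
        (hII _ _ hB0 hA0) (hII _ _ hA0 hc)).symm
    rw [e1, e2, e3, hW]
    simp only []
    ring
  have hAlim : Tendsto A (𝓝[>] 0) (𝓝[>] 0) := by
    refine tendsto_nhdsWithin_of_tendsto_nhds_of_eventually_within _ ?_ ?_
    · have hcont : Tendsto (fun ε : ℝ => -Real.log (1-ε)) (𝓝 0) (𝓝 (-Real.log (1-0))) := by
        refine Tendsto.neg ?_
        exact (Real.continuousAt_log (by norm_num)).comp
          ((continuous_const.sub continuous_id).tendsto 0)
      rw [hA]
      simpa using hcont.mono_left nhdsWithin_le_nhds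
    · filter_upwards [Ioo_mem_nhdsGT_of_mem (Set.mem_Ico.mpr ⟨le_refl (0:ℝ), one_pos⟩)] with ε hε
      have h5 : Real.log (1-ε) < 0 := Real.log_neg (by linarith [hε.2]) (by linarith [hε.1])
      simp only [mem_Ioi, hA]
      linarith
  have hRlim : Tendsto (fun ε => ∫ v in (B ε)..(A ε), ee v) (𝓝[>] 0) (𝓝 0) := by
    have hbound : ∀ᶠ ε in 𝓝[>] (0:ℝ),
        ‖∫ v in (B ε)..(A ε), ee v‖ ≤ (4 * Real.exp 1) * ε := by
      filter_upwards [Ioo_mem_nhdsGT_of_mem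
        (Set.mem_Ico.mpr ⟨le_refl (0:ℝ), (by norm_num : (0:ℝ) < 1/2)⟩)] with ε hε
      obtain ⟨hε0, hεh⟩ := hε
      obtain ⟨hb1, hb2, hb3, hb4, hb5⟩ := log_bounds hε0 hεh.le
      have hrA : A ε = -Real.log (1-ε) := rfl
      have hrB : B ε = Real.log (1+ε) := rfl
      rw [← hrA] at hb1 hb2 hb4 hb5
      rw [← hrB] at hb3 hb4 hb5
      have hB0 : 0 < B ε := lt_of_lt_of_le (by linarith) hb3
      have h := intervalIntegral.norm_integral_le_of_norm_le_const
        (C := Real.exp 1 * (2/ε)) (f := ee) (a := B ε) (b := A ε) ?_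
      · refine h.trans ?_
        have habs : |A ε - B ε| = A ε - B ε := abs_of_nonneg (by linarith)
        rw [habs]
        have h2 : Real.exp 1 * (2/ε) * (A ε - B ε) ≤ Real.exp 1 * (2/ε) * (2*ε^2) := by
          refine mul_le_mul_of_nonneg_left (by linarith) (by positivity)
        refine h2.trans ?_
        rw [show Real.exp 1 * (2/ε) * (2*ε^2) = (4 * Real.exp 1) * ε * (ε/ε) by ring,
          div_self hε0.ne', mul_one]
      · intro v hv
        rw [uIoc_of_le (by linarith)] at hv
        obtain ⟨hv1, hv2⟩ := hv
        have hv0 : 0 < v := lt_trans hB0 hv1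
        have hvε : ε/2 ≤ v := le_trans hb3 hv1.le
        have hv1' : v ≤ 1 := by nlinarith
        rw [Real.norm_eq_abs, ee, abs_of_nonneg (by positivity)]
        have hh1 : Real.exp v ≤ Real.exp 1 := Real.exp_le_exp.mpr hv1'
        have hh2 : Real.exp v / v ≤ Real.exp 1 / (ε/2) :=
          div_le_div₀ (Real.exp_pos 1).le hh1 (by positivity) hvε
        refine hh2.trans_eq ?_
        rw [div_div_eq_mul_div, mul_div_assoc]
    refine squeeze_zero_norm' hbound ?_
    have : Tendsto (fun ε : ℝ => (4 * Real.exp 1) * ε) (𝓝 0) (𝓝 ((4 * Real.exp 1) * 0)) :=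
      (continuous_const.mul continuous_id).tendsto 0
    simpa using this.mono_left nhdsWithin_le_nhds
  have hLlim : Tendsto (fun ε : ℝ =>
      (∫ t in (0:ℝ)..(1-ε), 1 / Real.log t) + ∫ t in (1+ε)..x, 1 / Real.log t)
      (𝓝[>] 0) (𝓝 M) := by
    have h1 : Tendsto (fun ε : ℝ => W (A ε) + ∫ v in (B ε)..(A ε), ee v)
        (𝓝[>] 0) (𝓝 (M + 0)) := (hWlim.comp hAlim).add hRlim
    rw [add_zero] at h1
    refine h1.congr' ?_
    filter_upwards [Ioo_mem_nhdsGT_of_mem (Set.mem_Ico.mpr ⟨le_refl (0:ℝ), hδ0⟩)] with ε hε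
    exact (hfW ε hε).symm
  refine ⟨M, M + E2, hLlim, hPlim, ?_⟩
  rw [stepC hx]
  have hsum := E_summable hx
  rw [Summable.tsum_eq_zero_add hsum]
  have h0 : (∫ u in Ioi (2*(((0:ℕ):ℝ)+1)*Real.log x), Real.exp (-u)/u) = E2 := by
    rw [hE2]
    norm_num [hcdef]
  have hshift : (∑' n : ℕ, ∫ u in Ioi (2*((((n+1:ℕ)):ℝ)+1)*Real.log x), Real.exp (-u)/u)
      = ∑' n : ℕ, ∫ u in Ioi (2*((n:ℝ)+2)*Real.log x), Real.exp (-u)/u := by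
    refine tsum_congr fun n => ?_
    congr 2
    push_cast
    ring
  rw [h0, hshift]
  ring
end
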